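/- arXiv:2304.09771 — 6 statements merged into one kernel-verified Lean document; each statement's English description precedes it below -/
import Mathlib

section
/- In any scheme satisfying the independence, uniformity, message and correctness constraints, for every user u ∈ [K] it holds that H(X_u | (W_k, Z_k)_{k∈[K]\{u}}) ≥ L. -/
open Finset
open scoped Classical

namespace WeakSecureSummation

noncomputable section

/-- Probability that random variable `X` takes value `a`, w.r.t. pmf `p`. -/
def pr {Ω α : Type*} [Fintype Ω] [DecidableEq α] (p : Ω → ℝ) (X : Ω → α) (a : α) : ℝ :=
  ∑ ω, if X ω = a then p ω else 0

/-- Shannon entropy of `X` in `q`-ary units. -/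
def H {Ω α : Type*} [Fintype Ω] [Fintype α] [DecidableEq α]
    (q : ℕ) (p : Ω → ℝ) (X : Ω → α) : ℝ :=
  -∑ a : α, pr p X a * (Real.log (pr p X a) / Real.log (q : ℝ))

/-- Conditional entropy `H(X | Y)` in `q`-ary units. -/
def Hc {Ω α β : Type*} [Fintype Ω] [Fintype α] [DecidableEq α] [Fintype β] [DecidableEq β]
    (q : ℕ) (p : Ω → ℝ) (X : Ω → α) (Y : Ω → β) : ℝ :=
  H q p (fun ω => (X ω, Y ω)) - H q p Y

/-- Conditional mutual information `I(X ; Y | Z)` in `q`-ary units. -/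
def MIc {Ω α β γ : Type*} [Fintype Ω] [Fintype α] [DecidableEq α] [Fintype β] [DecidableEq β]
    [Fintype γ] [DecidableEq γ] (q : ℕ) (p : Ω → ℝ) (X : Ω → α) (Y : Ω → β) (Z : Ω → γ) : ℝ :=
  Hc q p X Z + Hc q p Y Z - Hc q p (fun ω => (X ω, Y ω)) Z

/-- A secure-summation scheme for `K` users over the finite field `F`:
input length `L`, message length `LX`, source-key length `LZ`, a finite sample
space `Ω` with pmf `p`, inputs `W k`, source key `ZS`, keys `Z k` (with value
types `ZT k`), and messages `X k`. -/
structure Scheme (K : ℕ) (F : Type) [Field F] [Fintype F] [DecidableEq F] where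
  L : ℕ
  LX : ℕ
  LZ : ℕ
  Ω : Type
  [finΩ : Fintype Ω]
  p : Ω → ℝ
  W : Fin K → Ω → Fin L → F
  ZS : Ω → Fin LZ → F
  ZT : Fin K → Type
  [finZT : ∀ k, Fintype (ZT k)]
  [decZT : ∀ k, DecidableEq (ZT k)]
  Z : ∀ k, Ω → ZT k
  X : Fin K → Ω → Fin LX → F

attribute [instance] Scheme.finΩ Scheme.finZT Scheme.decZT

variable {K : ℕ} {F : Type} [Field F] [Fintype F] [DecidableEq F]

/-- The sum of all inputs. -/
def Scheme.sumW (C : Scheme K F) : C.Ω → (Fin C.L → F) := fun ω => ∑ k, C.W k ω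

/-- The tuple of inputs `(W k)_{k ∈ A}`. -/
def Scheme.Wtup (C : Scheme K F) (A : Finset (Fin K)) :
    C.Ω → ({x // x ∈ A} → (Fin C.L → F)) :=
  fun ω k => C.W k.1 ω

/-- The tuple of keys `(Z k)_{k ∈ A}`. -/
def Scheme.Ztup (C : Scheme K F) (A : Finset (Fin K)) :
    C.Ω → ((k : {x // x ∈ A}) → C.ZT k.1) :=
  fun ω k => C.Z k.1 ω

/-- The tuple `((W k, Z k))_{k ∈ A}`. -/
def Scheme.WZtup (C : Scheme K F) (A : Finset (Fin K)) :
    C.Ω → ((k : {x // x ∈ A}) → (Fin C.L → F) × C.ZT k.1) :=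
  fun ω k => (C.W k.1 ω, C.Z k.1 ω)

/-- The tuple of all messages `(X 1, …, X K)`. -/
def Scheme.Xall (C : Scheme K F) : C.Ω → (Fin K → Fin C.LX → F) := fun ω k => C.X k ω

/-- The tuple of all inputs `(W 1, …, W K)`. -/
def Scheme.Wall (C : Scheme K F) : C.Ω → (Fin K → Fin C.L → F) := fun ω k => C.W k ω

/-- `p` is a valid probability mass function. -/
def Scheme.ValidP (C : Scheme K F) : Prop :=
  (∀ ω, 0 ≤ C.p ω) ∧ (∑ ω, C.p ω = 1)

/-- Inputs are uniform on `F^L`, mutually independent, and independent of the source key. -/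
def Scheme.IndepUnif (C : Scheme K F) : Prop :=
  (∀ (k : Fin K) (a : Fin C.L → F), pr C.p (C.W k) a = ((Fintype.card F : ℝ) ^ C.L)⁻¹) ∧
  (∀ w : Fin K → Fin C.L → F, pr C.p C.Wall w = ∏ k, pr C.p (C.W k) (w k)) ∧
  (∀ (w : Fin K → Fin C.L → F) (z : Fin C.LZ → F),
    pr C.p (fun ω => (C.Wall ω, C.ZS ω)) (w, z) = pr C.p C.Wall w * pr C.p C.ZS z)

/-- Each key is a deterministic function of the source key, and each message is a
deterministic function of the own input and key. -/
def Scheme.Det (C : Scheme K F) : Prop :=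
  (∀ k, ∃ f : (Fin C.LZ → F) → C.ZT k, ∀ ω, C.Z k ω = f (C.ZS ω)) ∧
  (∀ k, ∃ g : (Fin C.L → F) → C.ZT k → (Fin C.LX → F), ∀ ω, C.X k ω = g (C.W k ω) (C.Z k ω))

/-- Correctness: the sum of inputs is decodable from all messages. -/
def Scheme.Correct (C : Scheme K F) : Prop :=
  Hc (Fintype.card F) C.p C.sumW C.Xall = 0

/-- All the model constraints except security. -/
def Scheme.Good (C : Scheme K F) : Prop :=
  C.ValidP ∧ C.IndepUnif ∧ C.Det ∧ C.Correct

/-- Security for a single pair: colluding with users in `T`, nothing is revealed about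
the inputs in `S` beyond the sum and what the colluders know. -/
def Scheme.SecureFor (C : Scheme K F) (S T : Finset (Fin K)) : Prop :=
  MIc (Fintype.card F) C.p (C.Wtup S) C.Xall (fun ω => (C.sumW ω, C.WZtup T ω)) = 0

/-- A security pattern: families of security input sets and colluding user sets. -/
structure Pattern (K M N : ℕ) where
  S : Fin M → Finset (Fin K)
  T : Fin N → Finset (Fin K)

/-- The family of security input sets is monotone (closed under subsets). -/
def Pattern.MonoS {K M N : ℕ} (P : Pattern K M N) : Prop :=
  ∀ (m : Fin M) (A : Finset (Fin K)), A ⊆ P.S m → ∃ m', P.S m' = A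

/-- The family of colluding user sets is monotone (closed under subsets). -/
def Pattern.MonoT {K M N : ℕ} (P : Pattern K M N) : Prop :=
  ∀ (n : Fin N) (A : Finset (Fin K)), A ⊆ P.T n → ∃ n', P.T n' = A

/-- A valid security pattern: monotone families, nonempty union of security sets,
and every colluding set of size at most `K - 2`. -/
def Pattern.Valid {K M N : ℕ} (P : Pattern K M N) : Prop :=
  P.MonoS ∧ P.MonoT ∧ (∃ m, (P.S m).Nonempty) ∧ (∀ n, (P.T n).card ≤ K - 2)

/-- The scheme is secure for every pair of the pattern. -/
def Scheme.Secure {M N : ℕ} (C : Scheme K F) (P : Pattern K M N) : Prop :=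
  ∀ m n, C.SecureFor (P.S m) (P.T n)

/-- Implicit security input set `S_I`. -/
def Pattern.SI {K M N : ℕ} (P : Pattern K M N) : Finset (Fin K) :=
  (Finset.univ.filter fun u =>
      ∃ m n, (P.S m ∪ P.T n).card = K - 1 ∧ Finset.univ \ (P.S m ∪ P.T n) = {u}) \
    Finset.univ.biUnion P.S

/-- Total security input set `S̄`. -/
def Pattern.Sbar {K M N : ℕ} (P : Pattern K M N) : Finset (Fin K) :=
  Finset.univ.biUnion P.S ∪ P.SI

/-- `A_{m,n} = (S_m ∪ T_n) ∩ S̄`. -/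
def Pattern.A {K M N : ℕ} (P : Pattern K M N) (m : Fin M) (n : Fin N) : Finset (Fin K) :=
  (P.S m ∪ P.T n) ∩ P.Sbar

/-- `a* = max_{m,n} |A_{m,n}|`. -/
def Pattern.aStar {K M N : ℕ} (P : Pattern K M N) : ℕ :=
  Finset.univ.sup fun mn : Fin M × Fin N => (P.A mn.1 mn.2).card

/-- `Q`: union of `S_m ∪ T_n` over all pairs attaining `a*`. -/
def Pattern.Q {K M N : ℕ} (P : Pattern K M N) : Finset (Fin K) :=
  Finset.univ.biUnion fun mn : Fin M × Fin N =>
    if (P.A mn.1 mn.2).card = P.aStar then P.S mn.1 ∪ P.T mn.2 else ∅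

/-- Feasibility for the linear program LP(𝒮,𝒯): variables `b k` for `k ∉ S̄`,
nonnegative, with `∑_{k ∈ [K] \ (S_m ∪ T_n)} b k ≥ 1` for every maximal pair. -/
def Pattern.LPFeasible {K M N : ℕ} (P : Pattern K M N) (b : Fin K → ℝ) : Prop :=
  (∀ k, k ∉ P.Sbar → 0 ≤ b k) ∧ (∀ k ∈ P.Sbar, b k = 0) ∧
  ∀ m n, (P.A m n).card = P.aStar → 1 ≤ ∑ k ∈ Finset.univ \ (P.S m ∪ P.T n), b k

/-- LP objective: `max_{m,n : |A_{m,n}| = a*} ∑_{k ∈ T_n \ S̄} b k`. -/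
def Pattern.LPObj {K M N : ℕ} (P : Pattern K M N) (b : Fin K → ℝ) : ℝ :=
  sSup {x : ℝ | ∃ m n, (P.A m n).card = P.aStar ∧ x = ∑ k ∈ P.T n \ P.Sbar, b k}

/-- `b*`: optimal value of the linear program. -/
def Pattern.bStar {K M N : ℕ} (P : Pattern K M N) : ℝ :=
  sInf {v : ℝ | ∃ b, P.LPFeasible b ∧ P.LPObj b = v}

/-- Achievability of key rate `R` for pattern `P`, with a given finite field `F`. -/
def AchWith (K M N : ℕ) (P : Pattern K M N) (R : ℝ) (F : Type)
    [Field F] [Fintype F] [DecidableEq F] : Prop :=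
  ∃ C : Scheme K F, 1 ≤ C.L ∧ C.Good ∧ C.Secure P ∧ (C.LZ : ℝ) / (C.L : ℝ) ≤ R

/-- Achievability of key rate `R`: some finite field (i.e. some prime power `q`)
admits a valid, correct, secure scheme of key rate at most `R`. -/
def Achievable {K M N : ℕ} (P : Pattern K M N) (R : ℝ) : Prop :=
  ∃ (F : Type) (i1 : Field F) (i2 : Fintype F) (i3 : DecidableEq F),
    @AchWith K M N P R F i1 i2 i3

/-- The optimal key rate `R*`: infimum of achievable rates. -/
def optRate {K M N : ℕ} (P : Pattern K M N) : ℝ :=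
  sInf {R : ℝ | Achievable P R}

end
end WeakSecureSummation


namespace WSSAux
open WeakSecureSummation
open scoped Classical
set_option linter.unusedSectionVars false
set_option linter.unnecessarySimpa false

variable {Ω α β γ δ : Type*} [Fintype Ω] [Fintype α] [DecidableEq α]
  [Fintype β] [DecidableEq β] [Fintype γ] [DecidableEq γ] [Fintype δ] [DecidableEq δ]
variable {p : Ω → ℝ} {q : ℕ}

lemma pr_nonneg (hp : ∀ ω, 0 ≤ p ω) (X : Ω → α) (a : α) : 0 ≤ pr p X a :=
  Finset.sum_nonneg fun ω _ => by split <;> simp [hp ω]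

lemma pr_total (X : Ω → α) : ∑ a, pr p X a = ∑ ω, p ω := by
  unfold pr
  rw [Finset.sum_comm]
  exact Finset.sum_congr rfl fun ω _ => by simp

lemma p_le_pr (hp : ∀ ω, 0 ≤ p ω) (X : Ω → α) (ω : Ω) : p ω ≤ pr p X (X ω) := by
  unfold pr
  have := Finset.single_le_sum (f := fun ω' => if X ω' = X ω then p ω' else 0)
    (fun ω' _ => by split <;> simp [hp ω']) (Finset.mem_univ ω)
  simpa using this

lemma pr_pos_exists (hp : ∀ ω, 0 ≤ p ω) (X : Ω → α) (a : α) (h : 0 < pr p X a) :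
    ∃ ω, 0 < p ω ∧ X ω = a := by
  by_contra hc
  push_neg at hc
  have : pr p X a = 0 := by
    refine Finset.sum_eq_zero fun ω _ => ?_
    split
    · rename_i he
      have h1 := hc ω
      have h2 := hp ω
      rcases lt_or_eq_of_le h2 with h3 | h3
      · exact absurd he (by simpa using h1 h3)
      · exact h3.symm
    · rfl
  simp [this] at h

lemma pr_comp (h : α → β) (X : Ω → α) (b : β) :
    pr p (fun ω => h (X ω)) b = ∑ a ∈ Finset.univ.filter (fun a => h a = b), pr p X a := by
  unfold pr
  rw [Finset.sum_comm]
  refine Finset.sum_congr rfl fun ω _ => ?_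
  rw [Finset.sum_ite_eq]
  simp

lemma pr_fst_marg (X : Ω → α) (Y : Ω → β) (b : β) :
    ∑ a, pr p (fun ω => (X ω, Y ω)) (a, b) = pr p Y b := by
  unfold pr
  rw [Finset.sum_comm]
  refine Finset.sum_congr rfl fun ω _ => ?_
  by_cases hY : Y ω = b <;> simp [Prod.ext_iff, hY]

lemma pr_pair_le (hp : ∀ ω, 0 ≤ p ω) (X : Ω → α) (Y : Ω → β) (a : α) (b : β) :
    pr p (fun ω => (X ω, Y ω)) (a, b) ≤ pr p Y b := by
  rw [← pr_fst_marg X Y b]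
  exact Finset.single_le_sum (f := fun a' => pr p (fun ω => (X ω, Y ω)) (a', b))
    (fun a' _ => pr_nonneg hp _ _) (Finset.mem_univ a)

lemma H_comp_inj (h : α → β) (hinj : Function.Injective h) (X : Ω → α) :
    H q p (fun ω => h (X ω)) = H q p X := by
  have key : ∀ a, pr p (fun ω => h (X ω)) (h a) = pr p X a := fun a => by
    unfold pr
    exact Finset.sum_congr rfl fun ω _ => by simp [hinj.eq_iff]
  have hz : ∀ b ∉ Finset.univ.image h, pr p (fun ω => h (X ω)) b = 0 := by
    intro b hb
    refine Finset.sum_eq_zero fun ω _ => ?_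
    have : h (X ω) ≠ b := fun he => hb (by simpa [← he] using Finset.mem_image_of_mem h (Finset.mem_univ (X ω)))
    simp [this]
  unfold H
  congr 1
  rw [← Finset.sum_subset (Finset.subset_univ (Finset.univ.image h))
      (fun b _ hb => by rw [hz b hb]; simp)]
  rw [Finset.sum_image (fun a _ a' _ he => hinj he)]
  exact Finset.sum_congr rfl fun a _ => by rw [key]


lemma Hc_eq_sum (X : Ω → α) (Y : Ω → β) :
    Hc q p X Y = ∑ ab : α × β, pr p (fun ω => (X ω, Y ω)) ab *
      ((Real.log (pr p Y ab.2) - Real.log (pr p (fun ω => (X ω, Y ω)) ab)) / Real.log q) := by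
  have hY : ∑ b, pr p Y b * (Real.log (pr p Y b) / Real.log q)
      = ∑ ab : α × β, pr p (fun ω => (X ω, Y ω)) ab * (Real.log (pr p Y ab.2) / Real.log q) := by
    rw [Fintype.sum_prod_type_right]
    refine Finset.sum_congr rfl fun b _ => ?_
    dsimp only
    rw [← Finset.sum_mul, pr_fst_marg]
  unfold Hc H
  rw [hY, neg_sub_neg, ← Finset.sum_sub_distrib]
  refine Finset.sum_congr rfl fun ab _ => ?_
  ring

lemma Hc_term_nonneg (hq : 2 ≤ q) (hp : ∀ ω, 0 ≤ p ω) (X : Ω → α) (Y : Ω → β) (ab : α × β) :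
    0 ≤ pr p (fun ω => (X ω, Y ω)) ab *
      ((Real.log (pr p Y ab.2) - Real.log (pr p (fun ω => (X ω, Y ω)) ab)) / Real.log q) := by
  have hlq : 0 < Real.log q := Real.log_pos (by exact_mod_cast hq.trans_lt' one_lt_two)
  rcases eq_or_lt_of_le (pr_nonneg hp (fun ω => (X ω, Y ω)) ab) with h | h
  · rw [← h]; ring_nf; simp
  · refine mul_nonneg h.le (div_nonneg (sub_nonneg.2 ?_) hlq.le)
    exact Real.log_le_log h (by rcases ab with ⟨a, b⟩; exact pr_pair_le hp X Y a b)

lemma Hc_nonneg (hq : 2 ≤ q) (hp : ∀ ω, 0 ≤ p ω) (X : Ω → α) (Y : Ω → β) :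
    0 ≤ Hc q p X Y := by
  rw [Hc_eq_sum]
  exact Finset.sum_nonneg fun ab _ => Hc_term_nonneg hq hp X Y ab

lemma Hc_eq_zero_of_det (hq : 2 ≤ q) (hp : ∀ ω, 0 ≤ p ω) (X : Ω → α) (Y : Ω → β)
    (hdet : ∀ ω ω', 0 < p ω → 0 < p ω' → Y ω = Y ω' → X ω = X ω') : Hc q p X Y = 0 := by
  rw [Hc_eq_sum]
  refine Finset.sum_eq_zero fun ab _ => ?_
  rcases eq_or_lt_of_le (pr_nonneg hp (fun ω => (X ω, Y ω)) ab) with h | h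
  · rw [← h]; ring
  · obtain ⟨ω, hω, hXY⟩ := pr_pos_exists hp _ ab h
    have hmarg : pr p Y ab.2 = pr p (fun ω => (X ω, Y ω)) ab := by
      rw [← pr_fst_marg X Y ab.2]
      have hz : ∀ a' ∈ Finset.univ, a' ≠ ab.1 →
          pr p (fun ω => (X ω, Y ω)) (a', ab.2) = 0 := by
        intro a' _ ha'
        by_contra hne
        have hpos : 0 < pr p (fun ω => (X ω, Y ω)) (a', ab.2) :=
          lt_of_le_of_ne (pr_nonneg hp _ _) (Ne.symm hne)
        obtain ⟨ω', hω', hXY'⟩ := pr_pos_exists hp _ _ hpos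
        have h1 : X ω' = a' := congrArg Prod.fst hXY'
        have h2 : Y ω' = ab.2 := congrArg Prod.snd hXY'
        have h3 : X ω = ab.1 := congrArg Prod.fst hXY
        have h4 : Y ω = ab.2 := congrArg Prod.snd hXY
        have := hdet ω ω' hω hω' (h4.trans h2.symm)
        exact ha' (by rw [← h1, ← this, h3])
      rw [Finset.sum_eq_single ab.1 hz (fun hab => absurd (Finset.mem_univ _) hab)]
    rw [hmarg]
    simp

lemma det_of_Hc_eq_zero (hq : 2 ≤ q) (hp : ∀ ω, 0 ≤ p ω) (X : Ω → α) (Y : Ω → β)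
    (h : Hc q p X Y = 0) :
    ∀ ω ω', 0 < p ω → 0 < p ω' → Y ω = Y ω' → X ω = X ω' := by
  intro ω ω' hω hω' hYeq
  by_contra hne
  rw [Hc_eq_sum] at h
  have hterm := (Finset.sum_eq_zero_iff_of_nonneg
    (fun ab _ => Hc_term_nonneg hq hp X Y ab)).1 h
  have hlq : 0 < Real.log q := Real.log_pos (by exact_mod_cast hq.trans_lt' one_lt_two)
  have key : ∀ ω₀ : Ω, 0 < p ω₀ →
      pr p (fun ω => (X ω, Y ω)) (X ω₀, Y ω₀) = pr p Y (Y ω₀) := by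
    intro ω₀ hω₀
    have hpos : 0 < pr p (fun ω => (X ω, Y ω)) (X ω₀, Y ω₀) :=
      lt_of_lt_of_le hω₀ (p_le_pr hp _ ω₀)
    have hposY : 0 < pr p Y (Y ω₀) := lt_of_lt_of_le hω₀ (p_le_pr hp Y ω₀)
    have := hterm (X ω₀, Y ω₀) (Finset.mem_univ _)
    rcases mul_eq_zero.1 this with h1 | h1
    · exact absurd h1 hpos.ne'
    · have : Real.log (pr p Y (Y ω₀)) = Real.log (pr p (fun ω => (X ω, Y ω)) (X ω₀, Y ω₀)) := by
        have := (div_eq_zero_iff.1 h1)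
        rcases this with h2 | h2
        · linarith [sub_eq_zero.1 h2]
        · exact absurd h2 hlq.ne'
      exact (Real.log_injOn_pos (Set.mem_Ioi.2 hpos) (Set.mem_Ioi.2 hposY) this.symm)
  have k1 := key ω hω
  have k2 := key ω' hω'
  rw [hYeq] at k1
  have hposY : 0 < pr p Y (Y ω') := lt_of_lt_of_le hω' (p_le_pr hp Y ω')
  have hsum : pr p (fun ω => (X ω, Y ω)) (X ω, Y ω') + pr p (fun ω => (X ω, Y ω)) (X ω', Y ω')
      ≤ pr p Y (Y ω') := by
    rw [← pr_fst_marg X Y (Y ω')]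
    have : ({X ω, X ω'} : Finset α) ⊆ Finset.univ := Finset.subset_univ _
    calc pr p (fun ω => (X ω, Y ω)) (X ω, Y ω') + pr p (fun ω => (X ω, Y ω)) (X ω', Y ω')
        = ∑ a ∈ ({X ω, X ω'} : Finset α), pr p (fun ω => (X ω, Y ω)) (a, Y ω') := by
          rw [Finset.sum_pair hne]
      _ ≤ _ := Finset.sum_le_sum_of_subset_of_nonneg this
          (fun a _ _ => pr_nonneg hp _ _)
  rw [k1, k2] at hsum
  linarith

lemma H_indep (hp1 : ∑ ω, p ω = 1) (X : Ω → α) (Y : Ω → β)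
    (h : ∀ a b, pr p (fun ω => (X ω, Y ω)) (a, b) = pr p X a * pr p Y b) :
    H q p (fun ω => (X ω, Y ω)) = H q p X + H q p Y := by
  have hX1 : ∑ a, pr p X a = 1 := by rw [pr_total, hp1]
  have hY1 : ∑ b, pr p Y b = 1 := by rw [pr_total, hp1]
  unfold H
  rw [Fintype.sum_prod_type]
  have key : ∀ a b, pr p (fun ω => (X ω, Y ω)) (a, b) *
      (Real.log (pr p (fun ω => (X ω, Y ω)) (a, b)) / Real.log q)
      = pr p Y b * (pr p X a * (Real.log (pr p X a) / Real.log q))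
        + pr p X a * (pr p Y b * (Real.log (pr p Y b) / Real.log q)) := by
    intro a b
    rw [h a b]
    rcases eq_or_ne (pr p X a) 0 with h0 | h0
    · simp [h0]
    rcases eq_or_ne (pr p Y b) 0 with h1 | h1
    · simp [h1]
    rw [Real.log_mul h0 h1]
    ring
  have : ∀ a, ∑ b, pr p (fun ω => (X ω, Y ω)) (a, b) *
      (Real.log (pr p (fun ω => (X ω, Y ω)) (a, b)) / Real.log q)
      = pr p X a * (Real.log (pr p X a) / Real.log q)
        + pr p X a * ∑ b, pr p Y b * (Real.log (pr p Y b) / Real.log q) := by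
    intro a
    rw [Finset.sum_congr rfl fun b _ => key a b, Finset.sum_add_distrib,
      ← Finset.sum_mul, ← Finset.mul_sum, hY1, one_mul]
  rw [Finset.sum_congr rfl fun a _ => this a, Finset.sum_add_distrib,
    ← Finset.sum_mul, hX1, one_mul]
  try ring

lemma indep_comp (X : Ω → α) (Y : Ω → β) (φ : α → γ) (ψ : β → δ)
    (h : ∀ a b, pr p (fun ω => (X ω, Y ω)) (a, b) = pr p X a * pr p Y b) (c : γ) (d : δ) :
    pr p (fun ω => (φ (X ω), ψ (Y ω))) (c, d)
      = pr p (fun ω => φ (X ω)) c * pr p (fun ω => ψ (Y ω)) d := by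
  have h1 := pr_comp (p := p) (fun ab : α × β => (φ ab.1, ψ ab.2)) (fun ω => (X ω, Y ω)) (c, d)
  have h2 := pr_comp (p := p) φ X c
  have h3 := pr_comp (p := p) ψ Y d
  rw [h1, h2, h3]
  have hfil : Finset.univ.filter (fun ab : α × β => (φ ab.1, ψ ab.2) = (c, d))
      = (Finset.univ.filter (fun a => φ a = c)) ×ˢ (Finset.univ.filter (fun b => ψ b = d)) := by
    ext ⟨a, b⟩
    simp [Prod.ext_iff, and_comm]
  rw [hfil, Finset.sum_product, Finset.sum_mul]
  refine Finset.sum_congr rfl fun a _ => ?_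
  rw [Finset.mul_sum]
  exact Finset.sum_congr rfl fun b _ => h a b

lemma H_unif {n : ℕ} (hq : 2 ≤ q) (X : Ω → α) (hcard : Fintype.card α = q ^ n)
    (h : ∀ a, pr p X a = ((q : ℝ) ^ n)⁻¹) : H q p X = n := by
  have hq1 : (1 : ℝ) < q := by exact_mod_cast hq.trans_lt' one_lt_two
  have hqn : ((q : ℝ) ^ n) ≠ 0 := by positivity
  have hlq : Real.log q ≠ 0 := (Real.log_pos hq1).ne'
  unfold H
  rw [Finset.sum_congr rfl fun a _ => by rw [h a]]
  rw [Finset.sum_const, Finset.card_univ, hcard]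
  rw [Real.log_inv, Real.log_pow]
  field_simp
  rw [nsmul_eq_mul, Nat.cast_pow, mul_neg, neg_neg]
  field_simp


lemma pr_equiv (e : α ≃ β) (X : Ω → α) (b : β) :
    pr p (fun ω => e (X ω)) b = pr p X (e.symm b) := by
  unfold pr
  refine Finset.sum_congr rfl fun ω _ => ?_
  simp [Equiv.eq_symm_apply]

lemma indep_comp_right (X : Ω → α) (Y : Ω → β) (ψ : β → δ)
    (h : ∀ a b, pr p (fun ω => (X ω, Y ω)) (a, b) = pr p X a * pr p Y b) (a : α) (d : δ) :
    pr p (fun ω => (X ω, ψ (Y ω))) (a, d) = pr p X a * pr p (fun ω => ψ (Y ω)) d := by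
  have := indep_comp X Y id ψ h a d
  simpa only [id_eq] using this

end WSSAux

open WeakSecureSummation in
/-- `H(X_u | (W_k, Z_k)_{k ∈ [K] \ {u}}) ≥ L` for every user `u`. -/
theorem message_entropy_lower_bound {K : ℕ} (hK : 2 ≤ K)
    {F : Type} [Field F] [Fintype F] [DecidableEq F]
    (C : Scheme K F) (hL : 1 ≤ C.L) (hGood : C.Good) :
    ∀ u : Fin K,
      (C.L : ℝ) ≤ Hc (Fintype.card F) C.p (C.X u) (C.WZtup (Finset.univ \ {u})) := by
  classical
  intro u
  obtain ⟨⟨hp0, hp1⟩, ⟨hUnif, hWindep, hWZindep⟩, ⟨hZdet, hXdet⟩, hCorrect⟩ := hGood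
  set q := Fintype.card F with hqdef
  have hq : 2 ≤ q := Fintype.one_lt_card
  choose f hf using hZdet
  choose g hg using hXdet
  set S : C.Ω → (Fin C.L → F) := C.sumW with hSdef
  set Y : C.Ω → ((k : {x // x ∈ Finset.univ \ {u}}) → (Fin C.L → F) × C.ZT k.1) :=
    C.WZtup (Finset.univ \ {u}) with hYdef
  have humem : u ∉ Finset.univ \ ({u} : Finset (Fin K)) := by simp
  -- Step A : H(S | X_u, Y) = 0
  have hA : Hc q C.p S (fun ω => (C.X u ω, Y ω)) = 0 := by
    refine WSSAux.Hc_eq_zero_of_det hq hp0 _ _ ?_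
    intro ω ω' hω hω' heq
    have hXu : C.X u ω = C.X u ω' := congrArg Prod.fst heq
    have hYe : Y ω = Y ω' := congrArg Prod.snd heq
    have hXall : C.Xall ω = C.Xall ω' := by
      funext k
      show C.X k ω = C.X k ω'
      by_cases hk : k = u
      · subst hk; exact hXu
      · have hkm : k ∈ Finset.univ \ ({u} : Finset (Fin K)) := by simp [hk]
        have h1 : C.W k ω = C.W k ω' := congrArg (fun y => (y ⟨k, hkm⟩).1) hYe
        have h2 : C.Z k ω = C.Z k ω' := congrArg (fun y => (y ⟨k, hkm⟩).2) hYe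
        rw [hg k ω, hg k ω', h1, h2]
    exact WSSAux.det_of_Hc_eq_zero hq hp0 C.sumW C.Xall hCorrect ω ω' hω hω' hXall
  -- Step B1 : H(S, Y) = H(W_u, Y)
  have hB1 : H q C.p (fun ω => (S ω, Y ω)) = H q C.p (fun ω => (C.W u ω, Y ω)) := by
    have hinj : Function.Injective
        (fun wy : (Fin C.L → F) × ((k : {x // x ∈ Finset.univ \ {u}}) →
            (Fin C.L → F) × C.ZT k.1) =>
          (wy.1 + ∑ k : {x // x ∈ Finset.univ \ {u}}, (wy.2 k).1, wy.2)) := by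
      rintro ⟨w, y⟩ ⟨w', y'⟩ hxy
      simp only [Prod.mk.injEq] at hxy
      obtain ⟨h1, h2⟩ := hxy
      subst h2
      exact Prod.ext (add_right_cancel h1) rfl
    have hpt : (fun ω => (S ω, Y ω))
        = fun ω => ((fun wy : (Fin C.L → F) × ((k : {x // x ∈ Finset.univ \ {u}}) →
            (Fin C.L → F) × C.ZT k.1) =>
          (wy.1 + ∑ k : {x // x ∈ Finset.univ \ {u}}, (wy.2 k).1, wy.2)) (C.W u ω, Y ω)) := by
      funext ω
      refine Prod.ext ?_ rfl
      show S ω = C.W u ω + ∑ k : {x // x ∈ Finset.univ \ {u}}, (Y ω k).1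
      have h3 : ∑ k : {x // x ∈ Finset.univ \ {u}}, (Y ω k).1
          = ∑ k ∈ Finset.univ \ {u}, C.W k ω := by
        rw [show (fun k : {x // x ∈ Finset.univ \ {u}} => (Y ω k).1)
            = fun k => C.W k.1 ω from rfl]
        exact Finset.sum_coe_sort _ (fun k => C.W k ω)
      have h4 : C.W u ω + ∑ k ∈ Finset.univ.erase u, C.W k ω = ∑ k, C.W k ω :=
        Finset.add_sum_erase _ (fun k => C.W k ω) (Finset.mem_univ u)
      rw [h3, ← Finset.erase_eq, h4, hSdef]
      rfl
    rw [hpt]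
    exact WSSAux.H_comp_inj _ hinj _
  -- Step B2 : W_u and Y are independent
  have hfact : ∀ a y, pr C.p (fun ω => (C.W u ω, Y ω)) (a, y)
      = pr C.p (C.W u) a * pr C.p Y y := by
    set RT := ((k : {x // x ∈ Finset.univ \ {u}}) → (Fin C.L → F)) × (Fin C.LZ → F) with hRT
    set R : C.Ω → RT := fun ω => (fun k => C.W k.1 ω, C.ZS ω) with hRdef
    set e : ((Fin K → (Fin C.L → F)) × (Fin C.LZ → F)) ≃ ((Fin C.L → F) × RT) :=
      { toFun := fun wz => (wz.1 u, (fun k => wz.1 k.1, wz.2))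
        invFun := fun ar =>
          (fun k => if h : k ∈ Finset.univ \ ({u} : Finset (Fin K)) then ar.2.1 ⟨k, h⟩
            else ar.1, ar.2.2)
        left_inv := by
          rintro ⟨w, z⟩
          refine Prod.ext ?_ rfl
          funext k
          by_cases hk : k ∈ Finset.univ \ ({u} : Finset (Fin K))
          · simp [hk]
          · have : k = u := by simpa using hk
            subst this
            simp [hk]
        right_inv := by
          rintro ⟨a, w', z⟩
          refine Prod.ext ?_ (Prod.ext ?_ rfl)
          · simp [humem]
          · funext k
            simp [k.2] } with hedef
    have hjoint : ∀ a (r : RT), pr C.p (fun ω => (C.W u ω, R ω)) (a, r)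
        = pr C.p (C.W u) a *
          ((∏ k : {x // x ∈ Finset.univ \ {u}}, pr C.p (C.W k.1) (r.1 k)) *
            pr C.p C.ZS r.2) := by
      rintro a ⟨w', z⟩
      set wt : Fin K → (Fin C.L → F) :=
        fun k => if h : k ∈ Finset.univ \ ({u} : Finset (Fin K)) then w' ⟨k, h⟩ else a with hwt
      have hptwise : (fun ω => (C.W u ω, R ω))
          = fun ω => e (C.Wall ω, C.ZS ω) := rfl
      rw [hptwise, WSSAux.pr_equiv e _ (a, (w', z))]
      have hsymm : e.symm (a, (w', z)) = (wt, z) := rfl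
      rw [hsymm]
      have hT : pr C.p (fun ω => (C.Wall ω, C.ZS ω)) (wt, z)
          = (∏ k, pr C.p (C.W k) (wt k)) * pr C.p C.ZS z := by
        rw [hWZindep, hWindep]
      rw [hT]
      have hsplit : (∏ k, pr C.p (C.W k) (wt k))
          = pr C.p (C.W u) (wt u) * ∏ k ∈ Finset.univ.erase u, pr C.p (C.W k) (wt k) :=
        (Finset.mul_prod_erase _ _ (Finset.mem_univ u)).symm
      have hwtu : wt u = a := by simp [hwt, humem]
      have hrest : ∏ k ∈ Finset.univ.erase u, pr C.p (C.W k) (wt k)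
          = ∏ k : {x // x ∈ Finset.univ \ {u}}, pr C.p (C.W k.1) (w' k) := by
        rw [Finset.erase_eq]
        rw [← Finset.prod_coe_sort (Finset.univ \ {u}) (fun k => pr C.p (C.W k) (wt k))]
        refine Finset.prod_congr rfl fun k _ => ?_
        have hk : wt k.1 = w' k := by rw [hwt]; exact dif_pos k.2
        rw [hk]
      rw [hsplit, hwtu, hrest, mul_assoc]
    have hWu1 : ∑ a, pr C.p (C.W u) a = 1 := by rw [WSSAux.pr_total, hp1]
    have hRmarg : ∀ r : RT, pr C.p R r
        = (∏ k : {x // x ∈ Finset.univ \ {u}}, pr C.p (C.W k.1) (r.1 k)) *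
            pr C.p C.ZS r.2 := by
      intro r
      rw [← WSSAux.pr_fst_marg (C.W u) R r]
      rw [Finset.sum_congr rfl fun a _ => hjoint a r, ← Finset.sum_mul, hWu1, one_mul]
    have hbase : ∀ a (r : RT), pr C.p (fun ω => (C.W u ω, R ω)) (a, r)
        = pr C.p (C.W u) a * pr C.p R r := by
      intro a r
      rw [hjoint a r, hRmarg r]
    set ψ : RT → ((k : {x // x ∈ Finset.univ \ {u}}) → (Fin C.L → F) × C.ZT k.1) :=
      fun r k => (r.1 k, f k.1 r.2) with hψ
    have hptY : ∀ ω, ψ (R ω) = Y ω := by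
      intro ω
      funext k
      show (C.W k.1 ω, f k.1 (C.ZS ω)) = (C.W k.1 ω, C.Z k.1 ω)
      rw [hf k.1 ω]
    intro a y
    have h1 := WSSAux.indep_comp_right (p := C.p) (C.W u) R ψ hbase a y
    simp only [hptY] at h1
    exact h1
  -- Step B3 : H(W_u) = L
  have hB3 : H q C.p (C.W u) = (C.L : ℝ) := by
    refine WSSAux.H_unif hq (C.W u) ?_ ?_
    · rw [Fintype.card_fun, Fintype.card_fin]
    · intro a
      exact hUnif u a
  have hB2 : H q C.p (fun ω => (C.W u ω, Y ω)) = H q C.p (C.W u) + H q C.p Y :=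
    WSSAux.H_indep hp1 _ _ hfact
  -- relabeling H(S,(X_u,Y)) = H(X_u,(S,Y))
  have hrel : H q C.p (fun ω => (C.X u ω, (S ω, Y ω)))
      = H q C.p (fun ω => (S ω, (C.X u ω, Y ω))) := by
    have hinj : Function.Injective
        (fun t : (Fin C.LX → F) × ((Fin C.L → F) × ((k : {x // x ∈ Finset.univ \ {u}}) →
          (Fin C.L → F) × C.ZT k.1)) => (t.2.1, (t.1, t.2.2))) := by
      rintro ⟨x, s, y⟩ ⟨x', s', y'⟩ hxy
      simp only [Prod.mk.injEq] at hxy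
      obtain ⟨h1, h2, h3⟩ := hxy
      simp [h1, h2, h3]
    exact (WSSAux.H_comp_inj _ hinj (fun ω => (C.X u ω, (S ω, Y ω)))).symm
  have hA' : H q C.p (fun ω => (S ω, (C.X u ω, Y ω)))
      - H q C.p (fun ω => (C.X u ω, Y ω)) = 0 := hA
  have hHc3 : 0 ≤ H q C.p (fun ω => (C.X u ω, (S ω, Y ω)))
      - H q C.p (fun ω => (S ω, Y ω)) :=
    WSSAux.Hc_nonneg hq hp0 (C.X u) (fun ω => (S ω, Y ω))
  show (C.L : ℝ) ≤ H q C.p (fun ω => (C.X u ω, Y ω)) - H q C.p Y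
  linarith [hB1, hB2, hB3, hrel, hA', hHc3]
end

section
/- In any scheme satisfying the independence, uniformity, message and correctness constraints, the message length satisfies L_X ≥ L, i.e., each user must send at least L symbols of 𝔽_q per L input symbols. -/
open Finset
open scoped Classical

section Aux

open WeakSecureSummation

variable {Ω α β : Type*} [Fintype Ω]

lemma pr_nonneg [DecidableEq α] {p : Ω → ℝ} (hp : ∀ ω, 0 ≤ p ω) (X : Ω → α) (a : α) :
    0 ≤ pr p X a := by
  apply Finset.sum_nonneg; intro ω _; split <;> simp [hp ω]

lemma exists_of_pr_pos [DecidableEq α] {p : Ω → ℝ} {X : Ω → α} {a : α}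
    (hp : ∀ ω, 0 ≤ p ω) (h : 0 < pr p X a) : ∃ ω, 0 < p ω ∧ X ω = a := by
  by_contra hc
  push_neg at hc
  have : pr p X a = 0 := by
    apply Finset.sum_eq_zero
    intro ω _
    split_ifs with h1
    · rcases (hp ω).lt_or_eq with h2 | h2
      · exact absurd h1 (hc ω h2)
      · exact h2.symm
    · rfl
  linarith

lemma sum_pr_eq [DecidableEq α] [Fintype α] {p : Ω → ℝ} (X : Ω → α) :
    ∑ a : α, pr p X a = ∑ ω, p ω := by
  unfold pr
  rw [Finset.sum_comm]
  apply Finset.sum_congr rfl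
  intro ω _
  simp

lemma pr_marginal [DecidableEq α] [Fintype α] [DecidableEq β] {p : Ω → ℝ}
    (A : Ω → α) (B : Ω → β) (b : β) :
    ∑ a : α, pr p (fun ω => (A ω, B ω)) (a, b) = pr p B b := by
  unfold pr
  rw [Finset.sum_comm]
  apply Finset.sum_congr rfl
  intro ω _
  by_cases hb : B ω = b
  · simp [hb, Prod.ext_iff]
  · simp [hb, Prod.ext_iff]

lemma pr_pair_le [DecidableEq α] [DecidableEq β] {p : Ω → ℝ} (hp : ∀ ω, 0 ≤ p ω)
    (A : Ω → α) (B : Ω → β) (a : α) (b : β) :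
    pr p (fun ω => (A ω, B ω)) (a, b) ≤ pr p B b := by
  apply Finset.sum_le_sum
  intro ω _
  split_ifs with h1 h2
  · exact le_refl _
  · exact absurd (congrArg Prod.snd h1) h2
  · exact hp ω
  · exact le_refl _

lemma pr_single_le [DecidableEq α] {p : Ω → ℝ} (hp : ∀ ω, 0 ≤ p ω) (X : Ω → α) (ω : Ω) :
    p ω ≤ pr p X (X ω) := by
  have := Finset.single_le_sum (f := fun ω' => if X ω' = X ω then p ω' else 0)
    (fun ω' _ => by split <;> simp [hp ω']) (Finset.mem_univ ω)
  simpa [pr] using this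

/-- Zero conditional entropy implies functional dependence on the support. -/
lemma Hc_eq_zero_det [Fintype α] [DecidableEq α] [Fintype β] [DecidableEq β]
    {q : ℕ} (hq : 2 ≤ q) {p : Ω → ℝ} (hp : ∀ ω, 0 ≤ p ω)
    {A : Ω → α} {B : Ω → β} (h : Hc q p A B = 0)
    {ω ω' : Ω} (hω : 0 < p ω) (hω' : 0 < p ω') (hB : B ω = B ω') : A ω = A ω' := by
  classical
  set P : α × β → ℝ := pr p (fun ω => (A ω, B ω)) with hP
  set Pb : β → ℝ := pr p B with hPb
  have hlogq : 0 < Real.log q := Real.log_pos (by exact_mod_cast hq.trans_lt' one_lt_two)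
  have hPnn : ∀ ab, 0 ≤ P ab := fun ab => pr_nonneg hp _ ab
  have hPble : ∀ a b, P (a, b) ≤ Pb b := fun a b => pr_pair_le hp A B a b
  -- rewrite Hc as a sum of nonnegative terms
  have hB2 : ∑ b : β, Pb b * (Real.log (Pb b) / Real.log q)
      = ∑ ab : α × β, P ab * (Real.log (Pb ab.2) / Real.log q) := by
    rw [Fintype.sum_prod_type_right]
    apply Finset.sum_congr rfl
    intro b _
    have h1 : ∑ a : α, P (a, b) * (Real.log (Pb (a, b).2) / Real.log ↑q)
        = (∑ a : α, P (a, b)) * (Real.log (Pb b) / Real.log ↑q) := by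
      rw [Finset.sum_mul]
    rw [h1, hP, hPb, pr_marginal A B b]
  have hHc : Hc q p A B
      = ∑ ab : α × β, P ab * (Real.log (Pb ab.2) - Real.log (P ab)) / Real.log q := by
    unfold Hc H
    rw [← hP, ← hPb, hB2, neg_sub_neg, ← Finset.sum_sub_distrib]
    apply Finset.sum_congr rfl
    intro ab _
    ring
  have hterm : ∀ ab : α × β,
      0 ≤ P ab * (Real.log (Pb ab.2) - Real.log (P ab)) / Real.log q := by
    intro ab
    rcases (hPnn ab).lt_or_eq with h0 | h0
    · apply div_nonneg _ hlogq.le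
      apply mul_nonneg (hPnn ab)
      have := Real.log_le_log h0 (hPble ab.1 ab.2)
      linarith
    · rw [← h0]; simp
  have hzero : ∀ ab : α × β,
      P ab * (Real.log (Pb ab.2) - Real.log (P ab)) / Real.log q = 0 := by
    have hsum : ∑ ab : α × β, P ab * (Real.log (Pb ab.2) - Real.log (P ab)) / Real.log q = 0 := by
      rw [← hHc, h]
    intro ab
    exact (Finset.sum_eq_zero_iff_of_nonneg (fun ab _ => hterm ab)).mp hsum ab (Finset.mem_univ ab)
  -- hence whenever P (a,b) > 0 we get P (a,b) = Pb b
  have key : ∀ a b, 0 < P (a, b) → P (a, b) = Pb b := by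
    intro a b hpos
    have h0 := hzero (a, b)
    rw [div_eq_zero_iff] at h0
    have hlogeq : Real.log (Pb b) = Real.log (P (a, b)) := by
      rcases h0 with h0 | h0
      · rcases mul_eq_zero.mp h0 with h1 | h1
        · exact absurd h1 hpos.ne'
        · linarith [sub_eq_zero.mp h1]
      · exact absurd h0 hlogq.ne'
    have hPbpos : 0 < Pb b := lt_of_lt_of_le hpos (hPble a b)
    calc P (a, b) = Real.exp (Real.log (P (a, b))) := (Real.exp_log hpos).symm
      _ = Real.exp (Real.log (Pb b)) := by rw [hlogeq]
      _ = Pb b := Real.exp_log hPbpos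
  -- now conclude determinism
  by_contra hne
  set b := B ω with hb
  have h1 : 0 < P (A ω, b) := lt_of_lt_of_le hω (pr_single_le hp (fun ω => (A ω, B ω)) ω)
  have h2 : 0 < P (A ω', b) := by
    have := pr_single_le hp (fun ω => (A ω, B ω)) ω'
    rw [← hB] at this
    exact lt_of_lt_of_le hω' this
  have e1 := key (A ω) b h1
  have e2 := key (A ω') b h2
  have hPbpos : 0 < Pb b := lt_of_lt_of_le h1 (hPble _ _)
  have hm : ∑ a : α, P (a, b) = Pb b := by rw [hP, hPb]; exact pr_marginal A B b
  have hsum : P (A ω, b) + P (A ω', b) ≤ Pb b := by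
    rw [← hm]
    have : ({A ω, A ω'} : Finset α) ⊆ Finset.univ := Finset.subset_univ _
    calc P (A ω, b) + P (A ω', b) = ∑ a ∈ ({A ω, A ω'} : Finset α), P (a, b) := by
          rw [Finset.sum_pair hne]
      _ ≤ ∑ a : α, P (a, b) := Finset.sum_le_sum_of_subset_of_nonneg this
          (fun a _ _ => hPnn (a, b))
  rw [e1, e2] at hsum
  linarith

end Aux

open WeakSecureSummation in
/-- the message length satisfies `L_X ≥ L`. -/
theorem message_length_lower_bound {K : ℕ} (hK : 2 ≤ K)
    {F : Type} [Field F] [Fintype F] [DecidableEq F]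
    (C : Scheme K F) (hL : 1 ≤ C.L) (hGood : C.Good) :
    C.L ≤ C.LX := by
  classical
  obtain ⟨⟨hpnn, hpsum⟩, ⟨hunif, hindep, hindepZ⟩, ⟨hdetZ, hdetX⟩, hcorr⟩ := hGood
  choose f hf using hdetZ
  choose g hg using hdetX
  have hq : 2 ≤ Fintype.card F := Fintype.one_lt_card
  -- find a key value with positive probability
  have hsz : ∑ z : Fin C.LZ → F, pr C.p C.ZS z = 1 := by rw [sum_pr_eq]; exact hpsum
  have hzpos : ∃ z, 0 < pr C.p C.ZS z := by
    by_contra hc; push_neg at hc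
    have hz0 : ∀ z, pr C.p C.ZS z = 0 :=
      fun z => le_antisymm (hc z) (pr_nonneg hpnn _ z)
    rw [Finset.sum_eq_zero (fun z _ => hz0 z)] at hsz
    norm_num at hsz
  obtain ⟨z, hz⟩ := hzpos
  set k₀ : Fin K := ⟨0, by omega⟩ with hk₀
  have hWall : ∀ w : Fin K → Fin C.L → F, 0 < pr C.p C.Wall w := by
    intro w
    rw [hindep w]
    apply Finset.prod_pos
    intro k _
    rw [hunif k (w k)]
    have : (0 : ℝ) < Fintype.card F := by positivity
    positivity
  -- for each own input, find a support point where all other inputs are 0 and key is z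
  have hpt : ∀ w₁ : Fin C.L → F, ∃ ω, 0 < C.p ω ∧
      C.Wall ω = (fun k => if k = k₀ then w₁ else 0) ∧ C.ZS ω = z := by
    intro w₁
    have hjoint : 0 < pr C.p (fun ω => (C.Wall ω, C.ZS ω))
        ((fun k => if k = k₀ then w₁ else 0), z) := by
      rw [hindepZ _ z]
      exact mul_pos (hWall _) hz
    obtain ⟨ω, hω, heq⟩ := exists_of_pr_pos hpnn hjoint
    exact ⟨ω, hω, congrArg Prod.fst heq, congrArg Prod.snd heq⟩
  choose pt hpt1 hpt2 hpt3 using hpt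
  have hW : ∀ (w₁ : Fin C.L → F) (k : Fin K),
      C.W k (pt w₁) = if k = k₀ then w₁ else 0 := by
    intro w₁ k; exact congrFun (hpt2 w₁) k
  have hsw : ∀ w₁, C.sumW (pt w₁) = w₁ := by
    intro w₁
    show ∑ k, C.W k (pt w₁) = w₁
    calc ∑ k, C.W k (pt w₁) = ∑ k, (if k = k₀ then w₁ else 0) :=
           Finset.sum_congr rfl (fun k _ => hW w₁ k)
      _ = w₁ := by simp
  have hinj : Function.Injective (fun w₁ : Fin C.L → F => g k₀ w₁ (f k₀ z)) := by
    intro w₁ w₁' hgw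
    simp only [] at hgw
    have hXall : C.Xall (pt w₁) = C.Xall (pt w₁') := by
      funext k
      show C.X k (pt w₁) = C.X k (pt w₁')
      rw [hg k (pt w₁), hg k (pt w₁'), hf k (pt w₁), hf k (pt w₁'),
        hpt3 w₁, hpt3 w₁', hW w₁ k, hW w₁' k]
      by_cases hk : k = k₀
      · subst hk
        simpa using hgw
      · simp [hk]
    have hsum := Hc_eq_zero_det hq hpnn hcorr (hpt1 w₁) (hpt1 w₁') hXall
    rw [hsw w₁, hsw w₁'] at hsum
    exact hsum
  have hcard := Fintype.card_le_of_injective _ hinj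
  simp only [Fintype.card_fun, Fintype.card_fin] at hcard
  exact (Nat.pow_le_pow_iff_right hq).mp hcard
end

section
/- Suppose a* ≤ K−1, a* = |S̄| and |Q| = K (the 'if' case). Then the linear program LP(𝒮,𝒯) is feasible and its optimal value b* is attained; every feasible solution (b_k)_{k∈[K]\S̄} has objective value at most Σ_{k∈[K]\S̄} b_k − 1, and there exists an optimal solution (b_k*)_{k∈[K]\S̄} with b* = Σ_{k∈[K]\S̄} b_k* − 1. -/
open Finset
open scoped Classical

open WeakSecureSummation in
/-- in the 'if' case, the LP is feasible and its optimum is attained;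
every feasible solution has objective at most `∑_{k ∈ [K]\S̄} b_k − 1`, and some
optimal solution satisfies `b* = ∑_{k ∈ [K]\S̄} b*_k − 1`. -/
theorem lp_optimal_value_property {K M N : ℕ} (hK : 2 ≤ K)
    (P : Pattern K M N) (hP : P.Valid)
    (h1 : P.aStar ≤ K - 1) (h2 : P.aStar = P.Sbar.card) (h3 : P.Q.card = K) :
    (∃ b, P.LPFeasible b ∧ P.LPObj b = P.bStar) ∧
    (∀ b, P.LPFeasible b → P.LPObj b ≤ (∑ k ∈ Finset.univ \ P.Sbar, b k) - 1) ∧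
    (∃ b, P.LPFeasible b ∧ P.LPObj b = P.bStar ∧
      P.bStar = (∑ k ∈ Finset.univ \ P.Sbar, b k) - 1) := by
  classical
  -- Abbreviations
  set Sb := P.Sbar with hSb
  have hSsub : ∀ m : Fin M, P.S m ⊆ Sb := fun m =>
    (Finset.subset_biUnion_of_mem P.S (Finset.mem_univ m)).trans Finset.subset_union_left
  have hQuniv : P.Q = Finset.univ := Finset.eq_univ_of_card _ (by simp [h3])
  have hmemQ : ∀ k : Fin K, ∃ mn : Fin M × Fin N,
      (P.A mn.1 mn.2).card = P.aStar ∧ k ∈ P.S mn.1 ∪ P.T mn.2 := by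
    intro k
    have hk : k ∈ P.Q := hQuniv ▸ Finset.mem_univ k
    unfold Pattern.Q at hk
    rw [Finset.mem_biUnion] at hk
    obtain ⟨mn, -, hmem⟩ := hk
    by_cases hc : (P.A mn.1 mn.2).card = P.aStar
    · exact ⟨mn, hc, by simpa [hc] using hmem⟩
    · simp [hc] at hmem
  set MaxP : Finset (Fin M × Fin N) :=
    Finset.univ.filter (fun mn => (P.A mn.1 mn.2).card = P.aStar) with hMaxP
  have hMaxNe : MaxP.Nonempty := by
    obtain ⟨mn, hc, -⟩ := hmemQ ⟨0, by omega⟩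
    exact ⟨mn, Finset.mem_filter.mpr ⟨Finset.mem_univ _, hc⟩⟩
  have hSbcard : Sb.card < K := by
    have : Sb.card ≤ K - 1 := h2 ▸ h1
    omega
  have hRne : ((Finset.univ : Finset (Fin K)) \ Sb).Nonempty := by
    rw [Finset.sdiff_nonempty]
    intro hsub
    have := Finset.card_le_card hsub
    simp [Finset.card_univ] at this
    omega
  have hSbarMax : ∀ mn ∈ MaxP, Sb ⊆ P.S mn.1 ∪ P.T mn.2 := by
    intro mn hmn
    rw [hMaxP, Finset.mem_filter] at hmn
    have hA : P.A mn.1 mn.2 = Sb := by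
      apply Finset.eq_of_subset_of_card_le
      · exact Finset.inter_subset_right
      · rw [hmn.2, h2]
    rw [← hA]
    exact Finset.inter_subset_left
  have hCompNe : ∀ mn ∈ MaxP,
      ((Finset.univ : Finset (Fin K)) \ (P.S mn.1 ∪ P.T mn.2)).Nonempty := by
    intro mn hmn
    rw [Finset.sdiff_nonempty]
    intro hsub
    have hU : P.S mn.1 ∪ P.T mn.2 = Finset.univ := Finset.univ_subset_iff.mp hsub
    obtain ⟨w, hw⟩ := hRne
    rw [Finset.mem_sdiff] at hw
    have hwS : w ∉ P.S mn.1 := fun h => hw.2 (hSsub _ h)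
    have hwT : w ∈ P.T mn.2 := by
      have hmem : w ∈ P.S mn.1 ∪ P.T mn.2 := hU ▸ Finset.mem_univ w
      rcases Finset.mem_union.mp hmem with h | h
      · exact absurd h hwS
      · exact h
    obtain ⟨n', hn'⟩ := hP.2.1 mn.2 ((P.T mn.2).erase w) (Finset.erase_subset _ _)
    have hU' : P.S mn.1 ∪ P.T n' = Finset.univ.erase w := by
      rw [hn']
      ext x
      have hx : x ∈ P.S mn.1 ∨ x ∈ P.T mn.2 :=
        Finset.mem_union.mp (hU ▸ Finset.mem_univ x)
      simp only [Finset.mem_union, Finset.mem_erase, Finset.mem_univ, and_true]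
      constructor
      · rintro (h | ⟨hne, -⟩)
        · exact fun e => hwS (e ▸ h)
        · exact hne
      · intro hne
        rcases hx with h | h
        · exact Or.inl h
        · exact Or.inr ⟨hne, h⟩
    have hcard : (P.S mn.1 ∪ P.T n').card = K - 1 := by
      rw [hU', Finset.card_erase_of_mem (Finset.mem_univ w), Finset.card_univ,
        Fintype.card_fin]
    have hsd : (Finset.univ : Finset (Fin K)) \ (P.S mn.1 ∪ P.T n') = {w} := by
      rw [hU']
      ext x
      simp only [Finset.mem_sdiff, Finset.mem_univ, true_and, Finset.mem_erase,
        Finset.mem_singleton, not_and, and_true]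
      constructor
      · intro h
        by_contra hne
        exact (h hne)
      · intro h hne
        exact absurd h hne
    have hwSI : w ∈ P.SI := by
      unfold Pattern.SI
      rw [Finset.mem_sdiff]
      constructor
      · exact Finset.mem_filter.mpr ⟨Finset.mem_univ _, mn.1, n', hcard, hsd⟩
      · intro hbi
        exact hw.2 (Finset.mem_union_left _ hbi)
    exact hw.2 (Finset.mem_union_right _ hwSI)
  -- decomposition of the sum
  have hzero : ∀ (b : Fin K → ℝ), ∀ mn ∈ MaxP,
      ∑ k ∈ Finset.univ \ Sb, b k =
        (∑ k ∈ P.T mn.2 \ Sb, b k) +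
          ∑ k ∈ Finset.univ \ (P.S mn.1 ∪ P.T mn.2), b k := by
    intro b mn hmn
    have hsub := hSbarMax mn hmn
    have hun : (P.T mn.2 \ Sb) ∪ (Finset.univ \ (P.S mn.1 ∪ P.T mn.2)) =
        Finset.univ \ Sb := by
      ext x
      simp only [Finset.mem_union, Finset.mem_sdiff, Finset.mem_univ, true_and]
      constructor
      · rintro (⟨hT, hS⟩ | hC)
        · exact hS
        · exact fun hxS => hC (Finset.mem_union.mp (hsub hxS))
      · intro hxS
        by_cases hx : x ∈ P.S mn.1 ∪ P.T mn.2
        · rcases Finset.mem_union.mp hx with h | h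
          · exact absurd (hSsub _ h) hxS
          · exact Or.inl ⟨h, hxS⟩
        · exact Or.inr fun h => hx (Finset.mem_union.mpr h)
    have hdis : Disjoint (P.T mn.2 \ Sb) (Finset.univ \ (P.S mn.1 ∪ P.T mn.2)) := by
      rw [Finset.disjoint_left]
      intro x hx hx2
      exact (Finset.mem_sdiff.mp hx2).2
        (Finset.mem_union_right _ (Finset.mem_sdiff.mp hx).1)
    rw [← hun, Finset.sum_union hdis]
  -- objective as a finite max
  set f : (Fin K → ℝ) → Fin M × Fin N → ℝ :=
    fun b mn => ∑ k ∈ P.T mn.2 \ Sb, b k with hf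
  have hImNe : ∀ b : Fin K → ℝ, (MaxP.image (f b)).Nonempty := fun b => hMaxNe.image _
  have hObj : ∀ b : Fin K → ℝ, P.LPObj b = (MaxP.image (f b)).max' (hImNe b) := by
    intro b
    have hset : {x : ℝ | ∃ m n, (P.A m n).card = P.aStar ∧ x = ∑ k ∈ P.T n \ P.Sbar, b k}
        = ↑(MaxP.image (f b)) := by
      ext x
      simp only [Finset.coe_image, Set.mem_image, Finset.mem_coe, hMaxP,
        Finset.mem_filter, Finset.mem_univ, true_and, Set.mem_setOf_eq, Finset.mem_coe]
      constructor
      · rintro ⟨m, n, hc, rfl⟩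
        exact ⟨(m, n), hc, rfl⟩
      · rintro ⟨⟨m, n⟩, hc, rfl⟩
        exact ⟨m, n, hc, rfl⟩
    unfold Pattern.LPObj
    rw [hset, Finset.Nonempty.csSup_eq_max']
  set s : Fin M × Fin N → (Fin K → ℝ) → ℝ :=
    fun mn b => ∑ k ∈ Finset.univ \ (P.S mn.1 ∪ P.T mn.2), b k with hs
  set G : (Fin K → ℝ) → ℝ :=
    fun b => (∑ k ∈ Finset.univ \ Sb, b k) - MaxP.inf' hMaxNe (fun mn => s mn b) with hG
  have hObjG : ∀ b : Fin K → ℝ, P.LPObj b = G b := by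
    intro b
    rw [hObj b]
    simp only [hG]
    apply le_antisymm
    · apply Finset.max'_le
      intro x hx
      obtain ⟨mn, hmn, rfl⟩ := Finset.mem_image.mp hx
      have hze := hzero b mn hmn
      have hle : MaxP.inf' hMaxNe (fun mn => s mn b) ≤ s mn b :=
        Finset.inf'_le _ hmn
      simp only [hf]
      simp only [hs] at hle
      linarith
    · obtain ⟨mn, hmn, heq⟩ := Finset.exists_mem_eq_inf' hMaxNe (fun mn => s mn b)
      have hze := hzero b mn hmn
      have hle : f b mn ≤ (MaxP.image (f b)).max' (hImNe b) :=
        Finset.le_max' _ _ (Finset.mem_image_of_mem _ hmn)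
      rw [heq]
      simp only [hf] at hle
      simp only [hs]
      linarith
  -- nonnegativity of feasible points
  have hbnn : ∀ b : Fin K → ℝ, P.LPFeasible b → ∀ k, 0 ≤ b k := by
    intro b hb k
    by_cases hk : k ∈ Sb
    · rw [hb.2.1 k hk]
    · exact hb.1 k hk
  have hbk_le_obj : ∀ b : Fin K → ℝ, P.LPFeasible b → ∀ k, k ∉ Sb → b k ≤ P.LPObj b := by
    intro b hb k hk
    obtain ⟨mn, hc, hmem⟩ := hmemQ k
    have hmn : mn ∈ MaxP := Finset.mem_filter.mpr ⟨Finset.mem_univ _, hc⟩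
    have hkT : k ∈ P.T mn.2 \ Sb := by
      rw [Finset.mem_sdiff]
      refine ⟨?_, hk⟩
      rcases Finset.mem_union.mp hmem with h | h
      · exact absurd (hSsub _ h) hk
      · exact h
    have h1' : b k ≤ f b mn :=
      Finset.single_le_sum (fun i _ => hbnn b hb i) hkT
    rw [hObj b]
    exact h1'.trans (Finset.le_max' _ _ (Finset.mem_image_of_mem _ hmn))
  -- Part 2
  have part2 : ∀ b : Fin K → ℝ, P.LPFeasible b →
      P.LPObj b ≤ (∑ k ∈ Finset.univ \ P.Sbar, b k) - 1 := by
    intro b hb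
    rw [hObjG b, hG]
    have h1' : (1 : ℝ) ≤ MaxP.inf' hMaxNe (fun mn => s mn b) :=
      Finset.le_inf' _ _ (fun mn hmn =>
        hb.2.2 mn.1 mn.2 (Finset.mem_filter.mp hmn).2)
    simp only [← hSb]
    linarith
  -- an explicit feasible point
  set b0 : Fin K → ℝ := fun k => if k ∈ Sb then 0 else 1 with hb0def
  have hb0 : P.LPFeasible b0 := by
    refine ⟨fun k hk => by simp [hb0def, hSb, hk], fun k hk => by simp [hb0def, hSb, hk], ?_⟩
    intro m n hmn
    have hmn' : ((m, n) : Fin M × Fin N) ∈ MaxP :=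
      Finset.mem_filter.mpr ⟨Finset.mem_univ _, hmn⟩
    have hC := hCompNe (m, n) hmn'
    have hsubC : Finset.univ \ (P.S m ∪ P.T n) ⊆ Finset.univ \ Sb :=
      Finset.sdiff_subset_sdiff (Finset.Subset.refl _) (hSbarMax (m, n) hmn')
    have hsum : ∑ k ∈ Finset.univ \ (P.S m ∪ P.T n), b0 k =
        (((Finset.univ \ (P.S m ∪ P.T n)).card : ℕ) : ℝ) := by
      rw [Finset.sum_congr rfl (fun k hk => ?_), Finset.sum_const, nsmul_eq_mul, mul_one]
      have hkn : k ∉ Sb := (Finset.mem_sdiff.mp (hsubC hk)).2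
      simp [hb0def, hkn]
    rw [hsum]
    exact_mod_cast Nat.one_le_iff_ne_zero.mpr (Finset.card_ne_zero_of_mem hC.choose_spec)
  -- compact truncated feasible region
  set v0 : ℝ := P.LPObj b0 with hv0
  set M0 : ℝ := max v0 1 with hM0
  set Kc : Set (Fin K → ℝ) := {b | P.LPFeasible b ∧ ∀ k, b k ≤ M0} with hKc
  have hKcsub : Kc ⊆ Set.Icc (0 : Fin K → ℝ) (fun _ => M0) := by
    intro b hb
    constructor
    · intro k
      exact hbnn b hb.1 k
    · intro k
      exact hb.2 k
  have hKcclosed : IsClosed Kc := by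
    have h1c : IsClosed {b : Fin K → ℝ | ∀ k, k ∉ Sb → 0 ≤ b k} := by
      rw [Set.setOf_forall]
      refine isClosed_iInter fun k => ?_
      by_cases hk : k ∈ Sb
      · have he : {b : Fin K → ℝ | k ∉ Sb → 0 ≤ b k} = Set.univ := by
          ext b; simp [hk]
        rw [he]; exact isClosed_univ
      · have he : {b : Fin K → ℝ | k ∉ Sb → 0 ≤ b k} = {b : Fin K → ℝ | 0 ≤ b k} := by
          ext b; simp [hk]
        rw [he]; exact isClosed_le continuous_const (continuous_apply k)
    have h2c : IsClosed {b : Fin K → ℝ | ∀ k ∈ Sb, b k = 0} := by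
      rw [Set.setOf_forall]
      refine isClosed_iInter fun k => ?_
      by_cases hk : k ∈ Sb
      · have he : {b : Fin K → ℝ | k ∈ Sb → b k = 0} = {b : Fin K → ℝ | b k = 0} := by
          ext b; simp [hk]
        rw [he]; exact isClosed_eq (continuous_apply k) continuous_const
      · have he : {b : Fin K → ℝ | k ∈ Sb → b k = 0} = Set.univ := by
          ext b; simp [hk]
        rw [he]; exact isClosed_univ
    have h3c : IsClosed {b : Fin K → ℝ | ∀ m n, (P.A m n).card = P.aStar →
        1 ≤ ∑ k ∈ Finset.univ \ (P.S m ∪ P.T n), b k} := by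
      rw [Set.setOf_forall]
      refine isClosed_iInter fun m => ?_
      rw [Set.setOf_forall]
      refine isClosed_iInter fun n => ?_
      by_cases hc : (P.A m n).card = P.aStar
      · have he : {b : Fin K → ℝ | (P.A m n).card = P.aStar →
            1 ≤ ∑ k ∈ Finset.univ \ (P.S m ∪ P.T n), b k} =
            {b : Fin K → ℝ | 1 ≤ ∑ k ∈ Finset.univ \ (P.S m ∪ P.T n), b k} := by
          ext b; simp [hc]
        rw [he]
        exact isClosed_le continuous_const
          (continuous_finset_sum _ fun k _ => continuous_apply k)
      · have he : {b : Fin K → ℝ | (P.A m n).card = P.aStar →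
            1 ≤ ∑ k ∈ Finset.univ \ (P.S m ∪ P.T n), b k} = Set.univ := by
          ext b; simp [hc]
        rw [he]; exact isClosed_univ
    have h4c : IsClosed {b : Fin K → ℝ | ∀ k, b k ≤ M0} := by
      rw [Set.setOf_forall]
      exact isClosed_iInter fun k =>
        isClosed_le (continuous_apply k) continuous_const
    have heq : Kc = ({b : Fin K → ℝ | ∀ k, k ∉ Sb → 0 ≤ b k} ∩
        {b : Fin K → ℝ | ∀ k ∈ Sb, b k = 0} ∩
        {b : Fin K → ℝ | ∀ m n, (P.A m n).card = P.aStar →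
          1 ≤ ∑ k ∈ Finset.univ \ (P.S m ∪ P.T n), b k} ∩
        {b : Fin K → ℝ | ∀ k, b k ≤ M0}) := by
      ext b
      simp only [hKc, Set.mem_setOf_eq, Set.mem_inter_iff, Pattern.LPFeasible, ← hSb]
      tauto
    rw [heq]
    exact ((h1c.inter h2c).inter h3c).inter h4c
  have hKccompact : IsCompact Kc :=
    IsCompact.of_isClosed_subset isCompact_Icc hKcclosed hKcsub
  have honeM0 : (1 : ℝ) ≤ M0 := le_max_right _ _
  have hb0Kc : b0 ∈ Kc := by
    refine ⟨hb0, fun k => ?_⟩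
    by_cases hk : k ∈ Sb
    · simp only [hb0def, hk, if_pos]
      linarith
    · simp only [hb0def, hk, if_neg, not_false_iff]
      simpa using honeM0
  have hKcNe : Kc.Nonempty := ⟨b0, hb0Kc⟩
  have hGcont : Continuous G := by
    apply Continuous.sub
    · exact continuous_finset_sum _ fun k _ => continuous_apply k
    · exact Continuous.finset_inf'_apply hMaxNe
        (fun mn _ => continuous_finset_sum _ fun k _ => continuous_apply k)
  obtain ⟨bh, hbhKc, hbhmin⟩ := hKccompact.exists_isMinOn hKcNe hGcont.continuousOn
  have hbhmin' : ∀ b ∈ Kc, G bh ≤ G b := fun b hb => hbhmin hb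
  have hglob : ∀ b : Fin K → ℝ, P.LPFeasible b → G bh ≤ P.LPObj b := by
    intro b hb
    by_cases hcase : ∀ k, b k ≤ M0
    · have hmem : b ∈ Kc := ⟨hb, hcase⟩
      calc G bh ≤ G b := hbhmin' b hmem
        _ = P.LPObj b := (hObjG b).symm
    · push_neg at hcase
      obtain ⟨k, hkM⟩ := hcase
      have hk : k ∉ Sb := by
        intro hmem
        rw [hb.2.1 k hmem] at hkM
        linarith
      have h1' : b k ≤ P.LPObj b := hbk_le_obj b hb k hk
      have h2' : G bh ≤ v0 := by
        rw [hv0, hObjG b0]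
        exact hbhmin' b0 hb0Kc
      have h3' : v0 ≤ M0 := le_max_left _ _
      linarith
  -- rescale the minimizer so that the smallest constraint sum equals 1
  set σ : ℝ := MaxP.inf' hMaxNe (fun mn => s mn bh) with hσ
  have hσ1 : 1 ≤ σ :=
    Finset.le_inf' _ _ fun mn hmn =>
      hbhKc.1.2.2 mn.1 mn.2 (Finset.mem_filter.mp hmn).2
  have hσpos : 0 < σ := lt_of_lt_of_le one_pos hσ1
  set b' : Fin K → ℝ := fun k => bh k / σ with hb'
  have hs' : ∀ mn : Fin M × Fin N, s mn b' = s mn bh / σ := by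
    intro mn
    simp only [hs, hb', Finset.sum_div]
  have hb'feas : P.LPFeasible b' := by
    refine ⟨fun k hk => div_nonneg (hbhKc.1.1 k hk) hσpos.le,
      fun k hk => by simp [hb', hbhKc.1.2.1 k hk], ?_⟩
    intro m n hmn
    have hmn' : ((m, n) : Fin M × Fin N) ∈ MaxP :=
      Finset.mem_filter.mpr ⟨Finset.mem_univ _, hmn⟩
    have hle : σ ≤ s (m, n) bh := Finset.inf'_le _ hmn'
    have hgoal : (1 : ℝ) ≤ s (m, n) b' := by
      rw [hs' (m, n), le_div_iff₀ hσpos, one_mul]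
      exact hle
    simpa only [hs] using hgoal
  have hb'Kc : b' ∈ Kc := by
    refine ⟨hb'feas, fun k => ?_⟩
    have h0 : 0 ≤ bh k := hbnn bh hbhKc.1 k
    calc bh k / σ ≤ bh k := div_le_self h0 hσ1
      _ ≤ M0 := hbhKc.2 k
  have hinf' : MaxP.inf' hMaxNe (fun mn => s mn b') = 1 := by
    apply le_antisymm
    · obtain ⟨mn0, hmn0, h0⟩ := Finset.exists_mem_eq_inf' hMaxNe (fun mn => s mn bh)
      have h1' : s mn0 b' = 1 := by
        rw [hs' mn0, ← h0, ← hσ, div_self hσpos.ne']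
      exact h1' ▸ Finset.inf'_le _ hmn0
    · exact Finset.le_inf' _ _ fun mn hmn => by
        simpa only [hs] using hb'feas.2.2 mn.1 mn.2 (Finset.mem_filter.mp hmn).2
  have hsum' : ∑ k ∈ Finset.univ \ Sb, b' k = (∑ k ∈ Finset.univ \ Sb, bh k) / σ := by
    simp only [hb', Finset.sum_div]
  have hGb' : G b' = (∑ k ∈ Finset.univ \ Sb, b' k) - 1 := by
    simp only [hG]
    rw [hinf']
  have hGbh : G bh = (∑ k ∈ Finset.univ \ Sb, bh k) - σ := by
    simp only [hG]
    rfl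
  have hSgeσ : σ ≤ ∑ k ∈ Finset.univ \ Sb, bh k := by
    obtain ⟨mn0, hmn0, h0⟩ := Finset.exists_mem_eq_inf' hMaxNe (fun mn => s mn bh)
    rw [hσ, h0]
    have hsub : Finset.univ \ (P.S mn0.1 ∪ P.T mn0.2) ⊆ Finset.univ \ Sb :=
      Finset.sdiff_subset_sdiff (Finset.Subset.refl _) (hSbarMax mn0 hmn0)
    simp only [hs]
    exact Finset.sum_le_sum_of_subset_of_nonneg hsub fun i _ _ => hbnn bh hbhKc.1 i
  have hGb'le : G b' ≤ G bh := by
    rw [hGb', hGbh, hsum']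
    set Ssum := ∑ k ∈ Finset.univ \ Sb, bh k with hSsum
    have key : Ssum ≤ (Ssum - σ + 1) * σ := by
      nlinarith [mul_nonneg (sub_nonneg.mpr hσ1) (sub_nonneg.mpr hSgeσ)]
    have h4 := (div_le_iff₀ hσpos).mpr key
    linarith
  have hGeq : G b' = G bh := le_antisymm hGb'le (hbhmin' b' hb'Kc)
  have hb'obj : P.LPObj b' = G b' := hObjG b'
  have hmemV : P.LPObj b' ∈ {v : ℝ | ∃ b, P.LPFeasible b ∧ P.LPObj b = v} :=
    ⟨b', hb'feas, rfl⟩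
  have hlbV : ∀ v ∈ {v : ℝ | ∃ b, P.LPFeasible b ∧ P.LPObj b = v}, P.LPObj b' ≤ v := by
    rintro v ⟨b, hb, rfl⟩
    rw [hb'obj, hGeq]
    exact hglob b hb
  have hbStar : P.bStar = P.LPObj b' := by
    unfold Pattern.bStar
    apply le_antisymm
    · exact csInf_le ⟨P.LPObj b', fun v hv => hlbV v hv⟩ hmemV
    · exact le_csInf ⟨_, hmemV⟩ hlbV
  refine ⟨⟨b', hb'feas, hbStar.symm⟩, part2, b', hb'feas, hbStar.symm, ?_⟩
  rw [hbStar, hb'obj, hGb']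
end

section
/- Let K ≥ 2, let F be a finite field, and let L ≥ 1. Let W_1,…,W_K be mutually independent random variables, each uniform on F^L, independent of key random variables Z_1,…,Z_K taking values in F^L and satisfying Σ_{k∈[K]} Z_k = 0 pointwise. Set X_k = W_k + Z_k for each k. Let S, T ⊆ [K] with |S ∪ T| ≤ K−1, and suppose H((Z_k)_{k∈S\T} | (Z_k)_{k∈T}) = |S\T| · L (entropy measured in |F|-ary units, with L the number of F-symbols per input). Then I((W_k)_{k∈S}; (X_1,…,X_K) | Σ_{k∈[K]} W_k, (W_k, Z_k)_{k∈T}) = 0. -/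
open Finset
open scoped Classical

namespace WeakSecureSummation

noncomputable section

variable {K : ℕ} {F : Type} [Field F] [Fintype F] [DecidableEq F]

section AuxProofs

set_option linter.unusedSectionVars false

variable {Ω α β : Type*} [Fintype Ω] [Fintype α] [DecidableEq α] [Fintype β] [DecidableEq β]

lemma decEq_subsingleton {α' : Type*} (i1 i2 : DecidableEq α') : i1 = i2 := by
  funext a b
  exact Subsingleton.elim _ _

lemma pr_irrel {Ω' α' : Type*} [Fintype Ω'] (i1 i2 : DecidableEq α') (p : Ω' → ℝ)
    (X : Ω' → α') (a : α') : @pr Ω' α' _ i1 p X a = @pr Ω' α' _ i2 p X a := by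
  rw [decEq_subsingleton i1 i2]

lemma MIc_irrel {Ω' α' β' γ' : Type*} [Fintype Ω'] [Fintype α'] [Fintype β'] [Fintype γ']
    (i1 i2 : DecidableEq α') (j1 j2 : DecidableEq β') (k1 k2 : DecidableEq γ')
    (q : ℕ) (p : Ω' → ℝ) (X : Ω' → α') (Y : Ω' → β') (Z : Ω' → γ') :
    @MIc Ω' α' β' γ' _ _ i1 _ j1 _ k1 q p X Y Z = @MIc Ω' α' β' γ' _ _ i2 _ j2 _ k2 q p X Y Z := by
  rw [decEq_subsingleton i1 i2, decEq_subsingleton j1 j2, decEq_subsingleton k1 k2]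

lemma pr_congr {X X' : Ω → α} (h : ∀ ω, X ω = X' ω) (p : Ω → ℝ) (a : α) :
    pr p X a = pr p X' a := by
  unfold pr; simp only [h]

lemma pr_nonneg (p : Ω → ℝ) (hp0 : ∀ ω, 0 ≤ p ω) (X : Ω → α) (a : α) : 0 ≤ pr p X a := by
  refine Finset.sum_nonneg fun ω _ => ?_
  split_ifs
  exacts [hp0 ω, le_rfl]

lemma self_le_pr (p : Ω → ℝ) (hp0 : ∀ ω, 0 ≤ p ω) (X : Ω → α) (ω0 : Ω) :
    p ω0 ≤ pr p X (X ω0) := by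
  have := Finset.single_le_sum (f := fun ω => if X ω = X ω0 then p ω else 0)
    (fun ω _ => by split_ifs; exacts [hp0 ω, le_rfl]) (Finset.mem_univ ω0)
  simpa [pr] using this

lemma sum_pr (p : Ω → ℝ) (X : Ω → α) : ∑ a, pr p X a = ∑ ω, p ω := by
  unfold pr
  rw [Finset.sum_comm]
  simp

lemma pr_comp (p : Ω → ℝ) (U : Ω → α) (g : α → β) (b : β) :
    pr p (fun ω => g (U ω)) b = ∑ a, if g a = b then pr p U a else 0 := by
  have h : ∀ a : α, (if g a = b then pr p U a else 0)
      = ∑ ω, if U ω = a ∧ g a = b then p ω else 0 := by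
    intro a; unfold pr; split_ifs with h <;> simp [h]
  rw [Finset.sum_congr rfl fun a _ => h a, Finset.sum_comm]
  refine Finset.sum_congr rfl fun ω _ => ?_
  rw [Finset.sum_eq_single (U ω)]
  · simp
  · intro a _ ha; exact if_neg (fun h => ha h.1.symm)
  · simp

lemma pr_comp' (p : Ω → ℝ) (U : Ω → α) {X : Ω → β} (g : α → β) (hg : ∀ ω, X ω = g (U ω))
    (b : β) : pr p X b = ∑ a, if g a = b then pr p U a else 0 := by
  rw [pr_congr hg p b]
  exact pr_comp p U g b

lemma sum_pr_mul (p : Ω → ℝ) (X : Ω → α) (F : ℝ → ℝ) :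
    ∑ a, pr p X a * F (pr p X a) = ∑ ω, p ω * F (pr p X (X ω)) := by
  have h : ∀ a : α, pr p X a * F (pr p X a)
      = ∑ ω, if X ω = a then p ω * F (pr p X a) else 0 := by
    intro a
    rw [pr, Finset.sum_mul]
    refine Finset.sum_congr rfl fun ω _ => ?_
    split_ifs <;> simp
  rw [Finset.sum_congr rfl fun a _ => h a, Finset.sum_comm]
  refine Finset.sum_congr rfl fun ω _ => ?_
  rw [Finset.sum_eq_single (X ω)]
  · simp
  · intro a _ ha; rw [if_neg (fun h : X ω = a => ha h.symm)]
  · simp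

lemma pr_marginal [ipair : DecidableEq (α × β)] (p : Ω → ℝ) (A : Ω → α) (B : Ω → β) (t : β) :
    ∑ u, pr p (fun ω => (A ω, B ω)) (u, t) = pr p B t := by
  unfold pr
  rw [Finset.sum_comm]
  refine Finset.sum_congr rfl fun ω _ => ?_
  rw [Finset.sum_eq_single (A ω)]
  · simp [Prod.ext_iff]
  · intro a _ ha; exact if_neg (by simp [Prod.ext_iff]; intro h; exact (ha h.symm).elim)
  · simp

lemma pr_m13 {γ' : Type*} [Fintype γ'] [DecidableEq γ'] [i1 : DecidableEq (β × γ')]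
    [i2 : DecidableEq ((α × β) × γ')] (p : Ω → ℝ)
    (A : Ω → α) (B : Ω → β) (C : Ω → γ') (b : β) (c : γ') :
    pr p (fun ω => (B ω, C ω)) (b, c)
      = ∑ a, pr p (fun ω => ((A ω, B ω), C ω)) ((a, b), c) := by
  unfold pr
  rw [Finset.sum_comm]
  refine Finset.sum_congr rfl fun ω _ => ?_
  rw [Finset.sum_eq_single (A ω)]
  · simp [Prod.ext_iff]
  · intro a _ ha
    exact if_neg fun h => ha (congrArg Prod.fst (congrArg Prod.fst h)).symm
  · simp

lemma pr_m23 {γ' : Type*} [Fintype γ'] [DecidableEq γ'] [i1 : DecidableEq (α × γ')]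
    [i2 : DecidableEq ((α × β) × γ')] (p : Ω → ℝ)
    (A : Ω → α) (B : Ω → β) (C : Ω → γ') (a : α) (c : γ') :
    pr p (fun ω => (A ω, C ω)) (a, c)
      = ∑ b, pr p (fun ω => ((A ω, B ω), C ω)) ((a, b), c) := by
  unfold pr
  rw [Finset.sum_comm]
  refine Finset.sum_congr rfl fun ω _ => ?_
  rw [Finset.sum_eq_single (B ω)]
  · simp [Prod.ext_iff]
  · intro b _ hb
    exact if_neg fun h => hb (congrArg Prod.snd (congrArg Prod.fst h)).symm
  · simp

lemma pr_m3 {γ' : Type*} [Fintype γ'] [DecidableEq γ'] [i2 : DecidableEq ((α × β) × γ')] (p : Ω → ℝ)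
    (A : Ω → α) (B : Ω → β) (C : Ω → γ') (c : γ') :
    pr p C c = ∑ ab : α × β, pr p (fun ω => ((A ω, B ω), C ω)) (ab, c) := by
  unfold pr
  rw [Finset.sum_comm]
  refine Finset.sum_congr rfl fun ω _ => ?_
  rw [Finset.sum_eq_single ((A ω, B ω))]
  · simp [Prod.ext_iff]
  · intro ab _ hab
    exact if_neg fun h => hab (congrArg Prod.fst h).symm
  · simp

/-- If `H(A|B)` attains the maximum `log |α| / log q`, then conditionally on any value
of `B`, `A` is uniform. -/
lemma cond_uniform [Nonempty α] [ipair : DecidableEq (α × β)] (q : ℕ) (hq : 2 ≤ q) (p : Ω → ℝ) (hp0 : ∀ ω, 0 ≤ p ω)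
    (hp1 : ∑ ω, p ω = 1) (A : Ω → α) (B : Ω → β)
    (hH : Hc q p A B = Real.log (Fintype.card α) / Real.log q) :
    ∀ u t, pr p (fun ω => (A ω, B ω)) (u, t) = (Fintype.card α : ℝ)⁻¹ * pr p B t := by
  obtain rfl : ipair = instDecidableEqProd := decEq_subsingleton _ _
  set r : α × β → ℝ := pr p (fun ω => (A ω, B ω)) with hr
  set s : β → ℝ := pr p B with hs
  have hN0 : (0:ℝ) < (Fintype.card α : ℝ) := by
    have := Fintype.card_pos (α := α)
    positivity
  set N : ℝ := (Fintype.card α : ℝ) with hNdef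
  have hlogq : (0:ℝ) < Real.log q := Real.log_pos (by exact_mod_cast hq)
  have hrnn : ∀ v, 0 ≤ r v := fun v => pr_nonneg p hp0 _ v
  have hsnn : ∀ t, 0 ≤ s t := fun t => pr_nonneg p hp0 _ t
  have hmarg : ∀ t, ∑ u, r (u, t) = s t := fun t => pr_marginal p A B t
  have hrle : ∀ u t, r (u, t) ≤ s t := by
    intro u t
    rw [← hmarg t]
    exact Finset.single_le_sum (f := fun u => r (u, t)) (fun u _ => hrnn _) (Finset.mem_univ u)
  have hrsum : ∑ v : α × β, r v = 1 := by rw [hr, sum_pr, hp1]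
  have hssum : ∑ t, s t = 1 := by rw [hs, sum_pr, hp1]
  have hkey : ∑ v : α × β, r v * (Real.log (s v.2) - Real.log (r v)) = Real.log N := by
    have h1 : ∑ t, s t * (Real.log (s t) / Real.log q)
        = ∑ v : α × β, r v * (Real.log (s v.2) / Real.log q) := by
      rw [Fintype.sum_prod_type_right]
      refine Finset.sum_congr rfl fun t _ => ?_
      have e : ∑ x : α, r (x, t) * (Real.log (s t) / Real.log (q:ℝ))
          = s t * (Real.log (s t) / Real.log (q:ℝ)) := by
        rw [← Finset.sum_mul, hmarg t]
      rw [← e]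
    have h2 : Hc q p A B = (∑ v : α × β, r v * (Real.log (s v.2) - Real.log (r v))) / Real.log q := by
      unfold Hc H
      rw [← hr, ← hs, neg_sub_neg, h1, ← Finset.sum_sub_distrib, Finset.sum_div]
      refine Finset.sum_congr rfl fun v _ => ?_
      ring
    have hc : Real.log (q:ℝ) ≠ 0 := ne_of_gt hlogq
    rw [h2, div_eq_div_iff hc hc] at hH
    exact mul_right_cancel₀ hc hH
  have hpt : ∀ v : α × β, r v * (Real.log (s v.2) - Real.log (r v))
      ≤ s v.2 / N - r v + r v * Real.log N := by
    intro v
    rcases eq_or_lt_of_le (hrnn v) with h0 | h0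
    · rw [← h0]
      simpa using div_nonneg (hsnn v.2) (le_of_lt hN0)
    · have hs0 : 0 < s v.2 := lt_of_lt_of_le h0 (hrle v.1 v.2)
      have hx : 0 < s v.2 / (N * r v) := by positivity
      have := Real.log_le_sub_one_of_pos hx
      have hlog : Real.log (s v.2 / (N * r v))
          = Real.log (s v.2) - Real.log N - Real.log (r v) := by
        rw [Real.log_div (ne_of_gt hs0) (by positivity), Real.log_mul (ne_of_gt hN0) (ne_of_gt h0)]
        ring
      rw [hlog] at this
      have h2 : r v * (Real.log (s v.2) - Real.log N - Real.log (r v))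
          ≤ r v * (s v.2 / (N * r v) - 1) :=
        mul_le_mul_of_nonneg_left this (le_of_lt h0)
      have h3 : r v * (s v.2 / (N * r v) - 1) = s v.2 / N - r v := by
        field_simp
      nlinarith [h2, h3]
  have hsumrhs : ∑ v : α × β, (s v.2 / N - r v + r v * Real.log N) = Real.log N := by
    rw [Finset.sum_add_distrib, Finset.sum_sub_distrib, ← Finset.sum_mul, hrsum]
    have : ∑ v : α × β, s v.2 / N = 1 := by
      rw [Fintype.sum_prod_type_right]
      have h4 : ∀ t, ∑ _u : α, s t / N = s t := by
        intro t
        rw [Finset.sum_const, Finset.card_univ, nsmul_eq_mul, ← hNdef]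
        field_simp
      rw [Finset.sum_congr rfl fun t _ => h4 t, hssum]
    rw [this]
    ring
  have heq : ∀ v : α × β, r v * (Real.log (s v.2) - Real.log (r v))
      = s v.2 / N - r v + r v * Real.log N := by
    have hzero : ∑ v : α × β, (s v.2 / N - r v + r v * Real.log N
        - r v * (Real.log (s v.2) - Real.log (r v))) = 0 := by
      rw [Finset.sum_sub_distrib, hsumrhs, hkey, sub_self]
    intro v
    have := (Finset.sum_eq_zero_iff_of_nonneg
      (fun w _ => sub_nonneg.mpr (hpt w))).mp hzero v (Finset.mem_univ v)
    linarith
  intro u t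
  have hv := heq (u, t)
  rcases eq_or_lt_of_le (hrnn (u, t)) with h0 | h0
  · rw [← h0] at hv ⊢
    simp only [zero_mul, mul_zero, zero_sub, neg_zero, add_zero, sub_zero, zero_add] at hv
    rw [div_eq_mul_inv, mul_comm] at hv
    exact hv
  · have hs0 : 0 < s t := lt_of_lt_of_le h0 (hrle u t)
    set x : ℝ := s t / (N * r (u, t)) with hxdef
    have hx : 0 < x := by positivity
    have hlogx : Real.log x = x - 1 := by
      have hlog : Real.log x = Real.log (s t) - Real.log N - Real.log (r (u, t)) := by
        rw [hxdef, Real.log_div (ne_of_gt hs0) (by positivity),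
          Real.log_mul (ne_of_gt hN0) (ne_of_gt h0)]
        ring
      have hxr : r (u, t) * (x - 1) = s t / N - r (u, t) := by
        rw [hxdef]
        field_simp
      have : r (u, t) * Real.log x = r (u, t) * (x - 1) := by
        rw [hlog, hxr]
        nlinarith [hv]
      exact mul_left_cancel₀ (ne_of_gt h0) this
    have hx1 : x = 1 := by
      by_contra hne
      exact absurd hlogx (ne_of_lt (Real.log_lt_sub_one_of_pos hx hne))
    have hsN : s t = N * r (u, t) := by
      have h5 := hx1
      rw [hxdef, div_eq_one_iff_eq (by positivity)] at h5
      exact h5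
    rw [hsN]
    field_simp

lemma H_eq_sum_omega (q : ℕ) (p : Ω → ℝ) (X : Ω → α) :
    H q p X = -∑ ω, p ω * (Real.log (pr p X (X ω)) / Real.log (q:ℝ)) := by
  unfold H
  rw [sum_pr_mul p X (fun x => Real.log x / Real.log (q:ℝ))]

lemma MIc_eq_zero_of_indep {γ : Type*} [Fintype γ] [DecidableEq γ]
    [iXZ : DecidableEq (α × γ)] [iYZ : DecidableEq (β × γ)]
    [iXYZ : DecidableEq ((α × β) × γ)]
    (q : ℕ) (p : Ω → ℝ) (hp0 : ∀ ω, 0 ≤ p ω)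
    (X : Ω → α) (Y : Ω → β) (Z : Ω → γ)
    (hfac : ∀ ω, p ω ≠ 0 →
      pr p (fun ω' => (X ω', Z ω')) (X ω, Z ω) * pr p (fun ω' => (Y ω', Z ω')) (Y ω, Z ω)
        = pr p (fun ω' => ((X ω', Y ω'), Z ω')) ((X ω, Y ω), Z ω) * pr p Z (Z ω)) :
    MIc q p X Y Z = 0 := by
  obtain rfl : iXZ = instDecidableEqProd := decEq_subsingleton _ _
  obtain rfl : iYZ = instDecidableEqProd := decEq_subsingleton _ _
  obtain rfl : iXYZ = instDecidableEqProd := decEq_subsingleton _ _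
  unfold MIc Hc
  rw [H_eq_sum_omega, H_eq_sum_omega, H_eq_sum_omega, H_eq_sum_omega]
  have key : ∀ ω, p ω * (Real.log (pr p (fun ω' => (X ω', Z ω')) (X ω, Z ω)) / Real.log (q:ℝ))
      + p ω * (Real.log (pr p (fun ω' => (Y ω', Z ω')) (Y ω, Z ω)) / Real.log (q:ℝ))
      = p ω * (Real.log (pr p (fun ω' => ((X ω', Y ω'), Z ω')) ((X ω, Y ω), Z ω)) / Real.log (q:ℝ))
      + p ω * (Real.log (pr p Z (Z ω)) / Real.log (q:ℝ)) := by
    intro ω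
    by_cases hw : p ω = 0
    · simp [hw]
    · have hwpos : 0 < p ω := lt_of_le_of_ne (hp0 ω) (Ne.symm hw)
      have h1 : 0 < pr p (fun ω' => (X ω', Z ω')) (X ω, Z ω) :=
        lt_of_lt_of_le hwpos (self_le_pr p hp0 _ ω)
      have h2 : 0 < pr p (fun ω' => (Y ω', Z ω')) (Y ω, Z ω) :=
        lt_of_lt_of_le hwpos (self_le_pr p hp0 _ ω)
      have h3 : 0 < pr p (fun ω' => ((X ω', Y ω'), Z ω')) ((X ω, Y ω), Z ω) :=
        lt_of_lt_of_le hwpos (self_le_pr p hp0 _ ω)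
      have h4 : 0 < pr p Z (Z ω) := lt_of_lt_of_le hwpos (self_le_pr p hp0 _ ω)
      have hlog : Real.log (pr p (fun ω' => (X ω', Z ω')) (X ω, Z ω))
          + Real.log (pr p (fun ω' => (Y ω', Z ω')) (Y ω, Z ω))
          = Real.log (pr p (fun ω' => ((X ω', Y ω'), Z ω')) ((X ω, Y ω), Z ω))
          + Real.log (pr p Z (Z ω)) := by
        rw [← Real.log_mul (ne_of_gt h1) (ne_of_gt h2), ← Real.log_mul (ne_of_gt h3) (ne_of_gt h4),
          hfac ω hw]
      linear_combination (p ω / Real.log (q:ℝ)) * hlog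
  have hsum : ∑ ω, (p ω * (Real.log (pr p (fun ω' => (X ω', Z ω')) (X ω, Z ω)) / Real.log (q:ℝ))
      + p ω * (Real.log (pr p (fun ω' => (Y ω', Z ω')) (Y ω, Z ω)) / Real.log (q:ℝ)))
      = ∑ ω, (p ω * (Real.log (pr p (fun ω' => ((X ω', Y ω'), Z ω')) ((X ω, Y ω), Z ω)) / Real.log (q:ℝ))
      + p ω * (Real.log (pr p Z (Z ω)) / Real.log (q:ℝ))) :=
    Finset.sum_congr rfl fun ω _ => key ω
  rw [Finset.sum_add_distrib, Finset.sum_add_distrib] at hsum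
  linarith [hsum]

end AuxProofs

end
end WeakSecureSummation

open WeakSecureSummation in
/-- with uniform i.i.d.-style inputs independent of zero-sum keys, and
`X_k = W_k + Z_k`, if `|S ∪ T| ≤ K-1` and `H((Z_k)_{k∈S\T} | (Z_k)_{k∈T}) = |S\T|·L`,
then `I((W_k)_{k∈S}; (X_1,…,X_K) | Σ_k W_k, (W_k,Z_k)_{k∈T}) = 0`. -/
theorem security_from_key_independence {K L : ℕ} (hK : 2 ≤ K) (hL : 1 ≤ L)
    {F : Type} [Field F] [Fintype F] [DecidableEq F]
    {Ω : Type} [Fintype Ω] (p : Ω → ℝ)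
    (hp0 : ∀ ω, 0 ≤ p ω) (hp1 : ∑ ω, p ω = 1)
    (W Z : Fin K → Ω → Fin L → F)
    (hunif : ∀ (k : Fin K) (a : Fin L → F),
      pr p (W k) a = ((Fintype.card F : ℝ) ^ L)⁻¹)
    (hWindep : ∀ w : Fin K → Fin L → F,
      pr p (fun ω k => W k ω) w = ∏ k, pr p (W k) (w k))
    (hWZindep : ∀ w z : Fin K → Fin L → F,
      pr p (fun ω => (fun k => W k ω, fun k => Z k ω)) (w, z)
        = pr p (fun ω k => W k ω) w * pr p (fun ω k => Z k ω) z)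
    (hzero : ∀ ω, ∑ k, Z k ω = 0)
    (S T : Finset (Fin K)) (hST : (S ∪ T).card ≤ K - 1)
    (hHZ : Hc (Fintype.card F) p
        (fun ω (k : {x // x ∈ S \ T}) => Z k.1 ω)
        (fun ω (k : {x // x ∈ T}) => Z k.1 ω)
      = ((S \ T).card : ℝ) * L) :
    MIc (Fintype.card F) p
      (fun ω (k : {x // x ∈ S}) => W k.1 ω)
      (fun ω (k : Fin K) => W k ω + Z k ω)
      (fun ω => (∑ k, W k ω, fun (k : {x // x ∈ T}) => (W k.1 ω, Z k.1 ω))) = 0 := by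
  classical
  set q : ℕ := Fintype.card F with hqdef
  have hq2 : 2 ≤ q := Fintype.one_lt_card
  set ρ : ℝ := ((q : ℝ) ^ L)⁻¹ with hρdef
  -- joint distribution of (W, Z)
  have hJ : ∀ (w z : Fin K → Fin L → F),
      pr p (fun ω => (fun k => W k ω, fun k => Z k ω)) (w, z)
        = ρ ^ K * pr p (fun ω k => Z k ω) z := by
    intro w z
    rw [hWZindep w z, hWindep w]
    have h5 : ∀ k : Fin K, pr p (W k) (w k) = ρ := fun k => hunif k (w k)
    rw [Finset.prod_congr rfl fun k _ => h5 k, Finset.prod_const, Finset.card_univ,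
      Fintype.card_fin]
  have hsupp : ∀ z : Fin K → Fin L → F, (∑ k, z k) ≠ 0 → pr p (fun ω k => Z k ω) z = 0 := by
    intro z hz
    refine Finset.sum_eq_zero fun ω _ => ?_
    rw [if_neg]
    intro h
    apply hz
    rw [← h]
    simpa using hzero ω
  -- conditional uniformity of the keys
  have huni : ∀ (u : {x // x ∈ S \ T} → Fin L → F) (t2 : {x // x ∈ T} → Fin L → F),
      pr p (fun ω => ((fun k : {x // x ∈ S \ T} => Z k.1 ω), fun k : {x // x ∈ T} => Z k.1 ω))
          (u, t2)
        = ρ ^ (S \ T).card * pr p (fun ω (k : {x // x ∈ T}) => Z k.1 ω) t2 := by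
    have hcard : Fintype.card ({x // x ∈ S \ T} → Fin L → F) = q ^ (L * (S \ T).card) := by
      rw [Fintype.card_fun, Fintype.card_fun, Fintype.card_fin, Fintype.card_coe, ← pow_mul]
    have hlogq : (0:ℝ) < Real.log q := Real.log_pos (by exact_mod_cast hq2)
    have hlogq' : Real.log (q:ℝ) ≠ 0 := ne_of_gt hlogq
    have hH' : Hc q p (fun ω (k : {x // x ∈ S \ T}) => Z k.1 ω)
        (fun ω (k : {x // x ∈ T}) => Z k.1 ω)
        = Real.log (Fintype.card ({x // x ∈ S \ T} → Fin L → F)) / Real.log q := by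
      rw [hHZ, hcard]
      push_cast [Real.log_pow]
      field_simp
    intro u t2
    have h6 := cond_uniform q hq2 p hp0 hp1
      (fun ω (k : {x // x ∈ S \ T}) => Z k.1 ω) (fun ω (k : {x // x ∈ T}) => Z k.1 ω) hH' u t2
    refine ((pr_congr (fun _ => rfl) p (u, t2)).trans h6).trans ?_
    rw [hcard]
    congr 1
    rw [hρdef, ← inv_pow, ← pow_mul]
    push_cast
    ring
  -- closed form for the joint distribution of ((W_S, X), (ΣW, (W,Z)_T))
  have hclosed : ∀ (a : {x // x ∈ S} → Fin L → F) (y : Fin K → Fin L → F)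
      (s : Fin L → F) (t : {x // x ∈ T} → (Fin L → F) × (Fin L → F)),
      pr p (fun ω => (((fun k : {x // x ∈ S} => W k.1 ω), fun k => W k ω + Z k ω),
          ((∑ k, W k ω), fun k : {x // x ∈ T} => (W k.1 ω, Z k.1 ω)))) ((a, y), (s, t))
        = if ((∀ k : {x // x ∈ T}, y k.1 = (t k).1 + (t k).2) ∧ (∑ k, y k = s))
              ∧ (∀ (k : Fin K) (hk : k ∈ S) (hk' : k ∈ T), a ⟨k, hk⟩ = (t ⟨k, hk'⟩).1)
          then ρ ^ K * (ρ ^ (S \ T).card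
              * pr p (fun ω (k : {x // x ∈ T}) => Z k.1 ω) (fun k => (t k).2))
          else 0 := by
    intro a y s t
    set G : (Fin K → Fin L → F) × (Fin K → Fin L → F) →
        (({x // x ∈ S} → Fin L → F) × (Fin K → Fin L → F)) ×
          ((Fin L → F) × ({x // x ∈ T} → (Fin L → F) × (Fin L → F))) :=
      fun wz => (((fun k : {x // x ∈ S} => wz.1 k.1), fun k => wz.1 k + wz.2 k),
          ((∑ k, wz.1 k), fun k : {x // x ∈ T} => (wz.1 k.1, wz.2 k.1))) with hG
    rw [pr_comp' p (fun ω => ((fun k => W k ω : Fin K → Fin L → F),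
        (fun k => Z k ω : Fin K → Fin L → F))) G (fun ω => rfl) ((a, y), (s, t))]
    rw [Fintype.sum_prod_type, Finset.sum_comm]
    simp only [hJ]
    set uS : {x // x ∈ S \ T} → Fin L → F :=
      fun k => y k.1 - a ⟨k.1, (Finset.mem_sdiff.mp k.2).1⟩ with huS
    set t2 : {x // x ∈ T} → Fin L → F := fun k => (t k).2 with ht2
    have inner : ∀ z : Fin K → Fin L → F,
        (∑ w : Fin K → Fin L → F, if G (w, z) = ((a, y), (s, t))
            then ρ ^ K * pr p (fun ω k => Z k ω) z else 0)
        = if (((fun k : {x // x ∈ S \ T} => z k.1), fun k : {x // x ∈ T} => z k.1) = (uS, t2))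
              ∧ (∑ k, z k = 0)
              ∧ (((∀ k : {x // x ∈ T}, y k.1 = (t k).1 + (t k).2) ∧ (∑ k, y k = s))
                ∧ (∀ (k : Fin K) (hk : k ∈ S) (hk' : k ∈ T), a ⟨k, hk⟩ = (t ⟨k, hk'⟩).1))
          then ρ ^ K * pr p (fun ω k => Z k ω) z else 0 := by
      intro z
      by_cases hz0 : ∑ k, z k = 0
      · by_cases hco : (((fun k : {x // x ∈ S \ T} => z k.1), fun k : {x // x ∈ T} => z k.1)
              = (uS, t2))
            ∧ (((∀ k : {x // x ∈ T}, y k.1 = (t k).1 + (t k).2) ∧ (∑ k, y k = s))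
              ∧ (∀ (k : Fin K) (hk : k ∈ S) (hk' : k ∈ T), a ⟨k, hk⟩ = (t ⟨k, hk'⟩).1))
        · obtain ⟨hzm, ⟨hc1, hc2⟩, hc3⟩ := hco
          have hzm1 : ∀ k : {x // x ∈ S \ T},
              z k.1 = y k.1 - a ⟨k.1, (Finset.mem_sdiff.mp k.2).1⟩ :=
            fun k => congrFun (congrArg Prod.fst hzm) k
          have hzm2 : ∀ k : {x // x ∈ T}, z k.1 = (t k).2 :=
            fun k => congrFun (congrArg Prod.snd hzm) k
          rw [if_pos ⟨hzm, hz0, ⟨hc1, hc2⟩, hc3⟩]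
          rw [Finset.sum_eq_single (fun k => y k - z k)]
          · rw [if_pos]
            rw [hG]
            refine Prod.ext (Prod.ext ?_ ?_) (Prod.ext ?_ ?_)
            · funext k
              by_cases hkT : k.1 ∈ T
              · have e1 : z k.1 = (t ⟨k.1, hkT⟩).2 := hzm2 ⟨k.1, hkT⟩
                have e2 : y k.1 = (t ⟨k.1, hkT⟩).1 + (t ⟨k.1, hkT⟩).2 := hc1 ⟨k.1, hkT⟩
                have e3 : a ⟨k.1, k.2⟩ = (t ⟨k.1, hkT⟩).1 := hc3 k.1 k.2 hkT
                show y k.1 - z k.1 = a k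
                rw [e1, e2, add_sub_cancel_right]
                exact e3.symm
              · have hmem : k.1 ∈ S \ T := Finset.mem_sdiff.mpr ⟨k.2, hkT⟩
                have e1 : z k.1 = y k.1 - a ⟨k.1, (Finset.mem_sdiff.mp hmem).1⟩ := hzm1 ⟨k.1, hmem⟩
                show y k.1 - z k.1 = a k
                rw [e1, sub_sub_cancel]
            · funext k
              show y k - z k + z k = y k
              rw [sub_add_cancel]
            · show ∑ k, (y k - z k) = s
              rw [Finset.sum_sub_distrib, hc2, hz0, sub_zero]
            · funext k
              refine Prod.ext ?_ ?_
              · have e1 : z k.1 = (t k).2 := hzm2 k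
                have e2 : y k.1 = (t k).1 + (t k).2 := hc1 k
                show y k.1 - z k.1 = (t k).1
                rw [e1, e2, add_sub_cancel_right]
              · exact hzm2 k
          · intro w _ hw
            refine if_neg fun h => hw ?_
            have h2 : (fun k => w k + z k) = y := congrArg Prod.snd (congrArg Prod.fst h)
            funext k
            exact eq_sub_of_add_eq (congrFun h2 k)
          · intro hnm
            exact absurd (Finset.mem_univ _) hnm
        · rw [if_neg (fun hcon => hco ⟨hcon.1, hcon.2.2⟩)]
          refine Finset.sum_eq_zero fun w _ => ?_
          refine if_neg fun h => hco ?_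
          rw [hG] at h
          have h1 : (fun k : {x // x ∈ S} => w k.1) = a :=
            congrArg Prod.fst (congrArg Prod.fst h)
          have h2 : (fun k => w k + z k) = y := congrArg Prod.snd (congrArg Prod.fst h)
          have h3 : (∑ k, w k) = s := congrArg Prod.fst (congrArg Prod.snd h)
          have h4 : (fun k : {x // x ∈ T} => (w k.1, z k.1)) = t :=
            congrArg Prod.snd (congrArg Prod.snd h)
          have hyk : ∀ k, w k + z k = y k := fun k => congrFun h2 k
          have ht1 : ∀ k : {x // x ∈ T}, (t k).1 = w k.1 :=
            fun k => (congrArg Prod.fst (congrFun h4 k)).symm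
          have ht2' : ∀ k : {x // x ∈ T}, (t k).2 = z k.1 :=
            fun k => (congrArg Prod.snd (congrFun h4 k)).symm
          refine ⟨?_, ⟨?_, ?_⟩, ?_⟩
          · refine Prod.ext ?_ ?_
            · funext k
              show z k.1 = uS k
              have haw : a ⟨k.1, (Finset.mem_sdiff.mp k.2).1⟩ = w k.1 :=
                (congrFun h1 ⟨k.1, (Finset.mem_sdiff.mp k.2).1⟩).symm
              show z k.1 = y k.1 - a ⟨k.1, (Finset.mem_sdiff.mp k.2).1⟩
              rw [haw, ← hyk k.1, add_sub_cancel_left]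
            · funext k
              show z k.1 = t2 k
              rw [ht2]
              exact (ht2' k).symm
          · intro k
            rw [ht1 k, ht2' k]
            exact (hyk k.1).symm
          · rw [← h3]
            have h7 : ∑ k, y k = ∑ k, (w k + z k) :=
              Finset.sum_congr rfl fun k _ => (hyk k).symm
            rw [h7, Finset.sum_add_distrib, hz0, add_zero]
          · intro k hk hk'
            rw [ht1 ⟨k, hk'⟩]
            exact (congrFun h1 ⟨k, hk⟩).symm
      · rw [if_neg (fun hcon => hz0 hcon.2.1), hsupp z hz0, mul_zero]
        refine Finset.sum_eq_zero fun w _ => ?_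
        split_ifs <;> rfl
    rw [Finset.sum_congr rfl fun z _ => inner z]
    by_cases hcnd : ((∀ k : {x // x ∈ T}, y k.1 = (t k).1 + (t k).2) ∧ (∑ k, y k = s))
        ∧ (∀ (k : Fin K) (hk : k ∈ S) (hk' : k ∈ T), a ⟨k, hk⟩ = (t ⟨k, hk'⟩).1)
    · rw [if_pos hcnd]
      have step2 : (∑ z : Fin K → Fin L → F,
          if (((fun k : {x // x ∈ S \ T} => z k.1), fun k : {x // x ∈ T} => z k.1) = (uS, t2))
              ∧ (∑ k, z k = 0)
              ∧ (((∀ k : {x // x ∈ T}, y k.1 = (t k).1 + (t k).2) ∧ (∑ k, y k = s))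
                ∧ (∀ (k : Fin K) (hk : k ∈ S) (hk' : k ∈ T), a ⟨k, hk⟩ = (t ⟨k, hk'⟩).1))
            then ρ ^ K * pr p (fun ω k => Z k ω) z else 0)
          = ∑ z : Fin K → Fin L → F,
            if (((fun k : {x // x ∈ S \ T} => z k.1), fun k : {x // x ∈ T} => z k.1) = (uS, t2))
            then ρ ^ K * pr p (fun ω k => Z k ω) z else 0 := by
        refine Finset.sum_congr rfl fun z _ => ?_
        by_cases hz0 : ∑ k, z k = 0
        · by_cases hzm : ((fun k : {x // x ∈ S \ T} => z k.1), fun k : {x // x ∈ T} => z k.1)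
              = (uS, t2)
          · rw [if_pos ⟨hzm, hz0, hcnd⟩, if_pos hzm]
          · rw [if_neg (fun h => hzm h.1), if_neg hzm]
        · rw [if_neg (fun h => hz0 h.2.1), hsupp z hz0, mul_zero]
          split_ifs <;> rfl
      rw [step2]
      have step3 : (∑ z : Fin K → Fin L → F,
          if (((fun k : {x // x ∈ S \ T} => z k.1), fun k : {x // x ∈ T} => z k.1) = (uS, t2))
            then ρ ^ K * pr p (fun ω k => Z k ω) z else 0)
          = ρ ^ K * ∑ z : Fin K → Fin L → F,
            if (((fun k : {x // x ∈ S \ T} => z k.1), fun k : {x // x ∈ T} => z k.1) = (uS, t2))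
            then pr p (fun ω k => Z k ω) z else 0 := by
        rw [Finset.mul_sum]
        refine Finset.sum_congr rfl fun z _ => ?_
        split_ifs <;> simp
      rw [step3]
      have step4 : (∑ z : Fin K → Fin L → F,
          if (((fun k : {x // x ∈ S \ T} => z k.1), fun k : {x // x ∈ T} => z k.1) = (uS, t2))
            then pr p (fun ω k => Z k ω) z else 0)
          = pr p (fun ω => ((fun k : {x // x ∈ S \ T} => Z k.1 ω),
              fun k : {x // x ∈ T} => Z k.1 ω)) (uS, t2) := by
        rw [pr_comp' p (fun ω => (fun k => Z k ω : Fin K → Fin L → F))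
          (fun z => ((fun k : {x // x ∈ S \ T} => z k.1), fun k : {x // x ∈ T} => z k.1))
          (fun ω => rfl) (uS, t2)]
      rw [step4, huni uS t2, ht2]
    · rw [if_neg hcnd]
      refine Finset.sum_eq_zero fun z _ => ?_
      exact if_neg fun h => hcnd h.2.2
  -- apply the conditional-independence criterion
  refine Eq.trans (MIc_irrel _ _ _ _ _ _ q p _ _ _) (MIc_eq_zero_of_indep q p hp0 _ _ _ ?_)
  intro ω _
  have hQ : (∀ k : {x // x ∈ T}, (fun k => W k ω + Z k ω) k.1 = ((fun k : {x // x ∈ T} => (W k.1 ω, Z k.1 ω)) k).1 + ((fun k : {x // x ∈ T} => (W k.1 ω, Z k.1 ω)) k).2)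
      ∧ (∑ k, (fun k => W k ω + Z k ω) k = (∑ k, W k ω)) := by
    refine ⟨fun k => rfl, ?_⟩
    show ∑ k, (W k ω + Z k ω) = ∑ k, W k ω
    rw [Finset.sum_add_distrib, hzero ω, add_zero]
  have hPa : ∀ (k : Fin K) (hk : k ∈ S) (hk' : k ∈ T),
      (fun k : {x // x ∈ S} => W k.1 ω) ⟨k, hk⟩ = ((fun k : {x // x ∈ T} => (W k.1 ω, Z k.1 ω)) ⟨k, hk'⟩).1 := fun k hk hk' => rfl
  have hP3 : pr p (fun ω' => (((fun k : {x // x ∈ S} => W k.1 ω'), (fun k => W k ω' + Z k ω')), ((∑ k, W k ω'), (fun k : {x // x ∈ T} => (W k.1 ω', Z k.1 ω'))))) (((fun k : {x // x ∈ S} => W k.1 ω), (fun k => W k ω + Z k ω)), ((∑ k, W k ω), (fun k : {x // x ∈ T} => (W k.1 ω, Z k.1 ω))))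
      = (ρ ^ K * (ρ ^ (S \ T).card * pr p (fun ω (k : {x // x ∈ T}) => Z k.1 ω) (fun k => ((fun k : {x // x ∈ T} => (W k.1 ω, Z k.1 ω)) k).2))) := by
    rw [hclosed (fun k : {x // x ∈ S} => W k.1 ω) (fun k => W k ω + Z k ω) (∑ k, W k ω) (fun k : {x // x ∈ T} => (W k.1 ω, Z k.1 ω)), if_pos ⟨hQ, hPa⟩]
  have hP2 : pr p (fun ω' => ((fun k => W k ω' + Z k ω'), ((∑ k, W k ω'), (fun k : {x // x ∈ T} => (W k.1 ω', Z k.1 ω')))))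
        ((fun k => W k ω + Z k ω), ((∑ k, W k ω), (fun k : {x // x ∈ T} => (W k.1 ω, Z k.1 ω))))
      = ((Finset.univ.filter (fun a : {x // x ∈ S} → Fin L → F => ∀ (k : Fin K) (hk : k ∈ S) (hk' : k ∈ T), a ⟨k, hk⟩ = ((fun k : {x // x ∈ T} => (W k.1 ω, Z k.1 ω)) ⟨k, hk'⟩).1)).card : ℝ) * (ρ ^ K * (ρ ^ (S \ T).card * pr p (fun ω (k : {x // x ∈ T}) => Z k.1 ω) (fun k => ((fun k : {x // x ∈ T} => (W k.1 ω, Z k.1 ω)) k).2))) := by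
    refine ((pr_congr (fun _ => rfl) p _).trans
      (pr_m13 p (fun ω' => (fun k : {x // x ∈ S} => W k.1 ω')) (fun ω' => (fun k => W k ω' + Z k ω'))
        (fun ω' => ((∑ k, W k ω'), (fun k : {x // x ∈ T} => (W k.1 ω', Z k.1 ω')))) (fun k => W k ω + Z k ω) ((∑ k, W k ω), (fun k : {x // x ∈ T} => (W k.1 ω, Z k.1 ω))))).trans ?_
    rw [Finset.sum_congr rfl fun a _ =>
      ((pr_congr (fun _ => rfl) p _).trans (hclosed a (fun k => W k ω + Z k ω) (∑ k, W k ω) (fun k : {x // x ∈ T} => (W k.1 ω, Z k.1 ω))))]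
    rw [Finset.sum_congr rfl fun a _ => if_congr (and_iff_right hQ) rfl rfl]
    rw [Finset.sum_ite, Finset.sum_const, Finset.sum_const_zero, add_zero, nsmul_eq_mul]
  have hP1 : pr p (fun ω' => ((fun k : {x // x ∈ S} => W k.1 ω'), ((∑ k, W k ω'), (fun k : {x // x ∈ T} => (W k.1 ω', Z k.1 ω')))))
        ((fun k : {x // x ∈ S} => W k.1 ω), ((∑ k, W k ω), (fun k : {x // x ∈ T} => (W k.1 ω, Z k.1 ω))))
      = ((Finset.univ.filter (fun y : Fin K → Fin L → F => (∀ k : {x // x ∈ T}, y k.1 = ((fun k : {x // x ∈ T} => (W k.1 ω, Z k.1 ω)) k).1 + ((fun k : {x // x ∈ T} => (W k.1 ω, Z k.1 ω)) k).2) ∧ (∑ k, y k = (∑ k, W k ω)))).card : ℝ) * (ρ ^ K * (ρ ^ (S \ T).card * pr p (fun ω (k : {x // x ∈ T}) => Z k.1 ω) (fun k => ((fun k : {x // x ∈ T} => (W k.1 ω, Z k.1 ω)) k).2))) := by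
    refine ((pr_congr (fun _ => rfl) p _).trans
      (pr_m23 p (fun ω' => (fun k : {x // x ∈ S} => W k.1 ω')) (fun ω' => (fun k => W k ω' + Z k ω'))
        (fun ω' => ((∑ k, W k ω'), (fun k : {x // x ∈ T} => (W k.1 ω', Z k.1 ω')))) (fun k : {x // x ∈ S} => W k.1 ω) ((∑ k, W k ω), (fun k : {x // x ∈ T} => (W k.1 ω, Z k.1 ω))))).trans ?_
    rw [Finset.sum_congr rfl fun y _ =>
      ((pr_congr (fun _ => rfl) p _).trans (hclosed (fun k : {x // x ∈ S} => W k.1 ω) y (∑ k, W k ω) (fun k : {x // x ∈ T} => (W k.1 ω, Z k.1 ω))))]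
    rw [Finset.sum_congr rfl fun y _ => if_congr (and_iff_left hPa) rfl rfl]
    rw [Finset.sum_ite, Finset.sum_const, Finset.sum_const_zero, add_zero, nsmul_eq_mul]
  have hP4 : pr p (fun ω' => ((∑ k, W k ω'), (fun k : {x // x ∈ T} => (W k.1 ω', Z k.1 ω')))) ((∑ k, W k ω), (fun k : {x // x ∈ T} => (W k.1 ω, Z k.1 ω)))
      = ((Finset.univ.filter (fun a : {x // x ∈ S} → Fin L → F => ∀ (k : Fin K) (hk : k ∈ S) (hk' : k ∈ T), a ⟨k, hk⟩ = ((fun k : {x // x ∈ T} => (W k.1 ω, Z k.1 ω)) ⟨k, hk'⟩).1)).card : ℝ) * (((Finset.univ.filter (fun y : Fin K → Fin L → F => (∀ k : {x // x ∈ T}, y k.1 = ((fun k : {x // x ∈ T} => (W k.1 ω, Z k.1 ω)) k).1 + ((fun k : {x // x ∈ T} => (W k.1 ω, Z k.1 ω)) k).2) ∧ (∑ k, y k = (∑ k, W k ω)))).card : ℝ) * (ρ ^ K * (ρ ^ (S \ T).card * pr p (fun ω (k : {x // x ∈ T}) => Z k.1 ω) (fun k => ((fun k : {x // x ∈ T}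 => (W k.1 ω, Z k.1 ω)) k).2)))) := by
    refine ((pr_congr (fun _ => rfl) p _).trans
      (pr_m3 p (fun ω' => (fun k : {x // x ∈ S} => W k.1 ω')) (fun ω' => (fun k => W k ω' + Z k ω'))
        (fun ω' => ((∑ k, W k ω'), (fun k : {x // x ∈ T} => (W k.1 ω', Z k.1 ω')))) ((∑ k, W k ω), (fun k : {x // x ∈ T} => (W k.1 ω, Z k.1 ω))))).trans ?_
    rw [Fintype.sum_prod_type]
    have inner2 : ∀ a : {x // x ∈ S} → Fin L → F,
        (∑ y : Fin K → Fin L → F,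
          pr p (fun ω' => (((fun ω'' => (fun k : {x // x ∈ S} => W k.1 ω'')) ω', (fun ω'' => (fun k => W k ω'' + Z k ω'')) ω'),
            (fun ω'' => ((∑ k, W k ω''), (fun k : {x // x ∈ T} => (W k.1 ω'', Z k.1 ω'')))) ω')) ((a, y), ((∑ k, W k ω), (fun k : {x // x ∈ T} => (W k.1 ω, Z k.1 ω)))))
        = if (∀ (k : Fin K) (hk : k ∈ S) (hk' : k ∈ T), a ⟨k, hk⟩ = ((fun k : {x // x ∈ T} => (W k.1 ω, Z k.1 ω)) ⟨k, hk'⟩).1)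
          then ((Finset.univ.filter (fun y : Fin K → Fin L → F => (∀ k : {x // x ∈ T}, y k.1 = ((fun k : {x // x ∈ T} => (W k.1 ω, Z k.1 ω)) k).1 + ((fun k : {x // x ∈ T} => (W k.1 ω, Z k.1 ω)) k).2) ∧ (∑ k, y k = (∑ k, W k ω)))).card : ℝ) * (ρ ^ K * (ρ ^ (S \ T).card * pr p (fun ω (k : {x // x ∈ T}) => Z k.1 ω) (fun k => ((fun k : {x // x ∈ T} => (W k.1 ω, Z k.1 ω)) k).2))) else 0 := by
      intro a
      rw [Finset.sum_congr rfl fun y _ =>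
        ((pr_congr (fun _ => rfl) p _).trans (hclosed a y (∑ k, W k ω) (fun k : {x // x ∈ T} => (W k.1 ω, Z k.1 ω))))]
      by_cases hpa : (∀ (k : Fin K) (hk : k ∈ S) (hk' : k ∈ T), a ⟨k, hk⟩ = ((fun k : {x // x ∈ T} => (W k.1 ω, Z k.1 ω)) ⟨k, hk'⟩).1)
      · rw [if_pos hpa]
        rw [Finset.sum_congr rfl fun y _ => if_congr (and_iff_left hpa) rfl rfl]
        rw [Finset.sum_ite, Finset.sum_const, Finset.sum_const_zero, add_zero, nsmul_eq_mul]
      · rw [if_neg hpa]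
        refine Finset.sum_eq_zero fun y _ => ?_
        exact if_neg fun h => hpa h.2
    rw [Finset.sum_congr rfl fun a _ => inner2 a]
    rw [Finset.sum_ite, Finset.sum_const, Finset.sum_const_zero, add_zero, nsmul_eq_mul]
  show pr p (fun ω' => ((fun k : {x // x ∈ S} => W k.1 ω'), ((∑ k, W k ω'), (fun k : {x // x ∈ T} => (W k.1 ω', Z k.1 ω'))))) ((fun k : {x // x ∈ S} => W k.1 ω), ((∑ k, W k ω), (fun k : {x // x ∈ T} => (W k.1 ω, Z k.1 ω))))
      * pr p (fun ω' => ((fun k => W k ω' + Z k ω'), ((∑ k, W k ω'), (fun k : {x // x ∈ T} => (W k.1 ω', Z k.1 ω'))))) ((fun k => W k ω + Z k ω), ((∑ k, W k ω), (fun k : {x // x ∈ T} => (W k.1 ω, Z k.1 ω))))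
    = pr p (fun ω' => (((fun k : {x // x ∈ S} => W k.1 ω'), (fun k => W k ω' + Z k ω')), ((∑ k, W k ω'), (fun k : {x // x ∈ T} => (W k.1 ω', Z k.1 ω'))))) (((fun k : {x // x ∈ S} => W k.1 ω), (fun k => W k ω + Z k ω)), ((∑ k, W k ω), (fun k : {x // x ∈ T} => (W k.1 ω, Z k.1 ω))))
      * pr p (fun ω' => ((∑ k, W k ω'), (fun k : {x // x ∈ T} => (W k.1 ω', Z k.1 ω')))) ((∑ k, W k ω), (fun k : {x // x ∈ T} => (W k.1 ω, Z k.1 ω)))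
  rw [hP1, hP2, hP3, hP4]
  ring
end

section
/- Let F be a finite field and let a, n be integers with 1 ≤ a < n. If |F| > a · binom(n, a), then there exist vectors h_1,…,h_n ∈ F^a such that h_1 + h_2 + ⋯ + h_n = 0 and every subfamily of at most a of the vectors h_1,…,h_n is linearly independent. -/
open Finset
open scoped Classical

open Polynomial in
theorem my_lagrange_sum_zero {F : Type*} [Field F] {ι : Type*} [DecidableEq ι]
    (s : Finset ι) (v : ι → F) (hv : Set.InjOn v s) (t : ℕ) (ht : t < s.card - 1) :
    ∑ i ∈ s, v i ^ t * (∏ j ∈ s.erase i, (v i - v j))⁻¹ = 0 := by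
  have hcard : t + 1 < s.card := by omega
  have h1 : (X ^ t : F[X]) = Lagrange.interpolate s v fun i => (X ^ t : F[X]).eval (v i) :=
    Lagrange.eq_interpolate hv (by
      rw [degree_X_pow]; exact_mod_cast (by omega : t < s.card))
  have h2 := congrArg (fun p : F[X] => p.coeff (s.card - 1)) h1
  simp only [Lagrange.interpolate_apply, Polynomial.finset_sum_coeff, coeff_X_pow,
    coeff_C_mul, eval_pow, eval_X] at h2
  have hne : ∀ i ∈ s, (Lagrange.basis s v i).coeff (s.card - 1)
      = (∏ j ∈ s.erase i, (v i - v j))⁻¹ := by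
    intro i hi
    have hnd : (Lagrange.basis s v i).natDegree = s.card - 1 := Lagrange.natDegree_basis hv hi
    rw [← hnd, Polynomial.coeff_natDegree]
    rw [Lagrange.basis, leadingCoeff_prod, ← Finset.prod_inv_distrib]
    refine Finset.prod_congr rfl fun j hj => ?_
    have hij : v i ≠ v j := by
      rcases Finset.mem_erase.mp hj with ⟨hne, hjs⟩
      exact fun h => hne.symm (hv hi hjs h)
    rw [Lagrange.basisDivisor, leadingCoeff_mul, leadingCoeff_C,
      (monic_X_sub_C (v j)).leadingCoeff, mul_one]
  rw [if_neg (by omega : ¬ s.card - 1 = t)] at h2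
  rw [show ∑ i ∈ s, v i ^ t * (∏ j ∈ s.erase i, (v i - v j))⁻¹
      = ∑ i ∈ s, v i ^ t * (Lagrange.basis s v i).coeff (s.card - 1) from
    Finset.sum_congr rfl fun i hi => by rw [hne i hi], ← h2]


theorem my_vandermonde_li {F : Type*} [Field F] {n a : ℕ} (x : Fin n → F)
    (hx : Function.Injective x) (c : Fin n → F) (hc : ∀ i, c i ≠ 0)
    (s : Finset (Fin n)) (hs : s.card ≤ a) :
    LinearIndependent F
      (fun i : {y // y ∈ s} => (fun t : Fin a => c i.1 * x i.1 ^ (t : ℕ))) := by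
  classical
  set k := s.card with hk
  let e : Fin k ≃ {y // y ∈ s} := s.equivFin.symm
  let M : Matrix (Fin k) (Fin k) F := Matrix.of fun i t => c (e i).1 * x (e i).1 ^ (t : ℕ)
  have hdet : M.det ≠ 0 := by
    have hM : M = Matrix.of fun i t =>
        c (e i).1 * (Matrix.vandermonde fun i => x (e i).1) i t := rfl
    rw [hM, Matrix.det_mul_column, Matrix.det_vandermonde]
    refine mul_ne_zero (Finset.prod_ne_zero_iff.2 fun i _ => hc _) ?_
    refine Finset.prod_ne_zero_iff.2 fun i _ => Finset.prod_ne_zero_iff.2 fun j hj => ?_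
    rw [sub_ne_zero]
    intro hxy
    have : j = i := e.injective (Subtype.ext (hx hxy))
    exact absurd this (by rw [Finset.mem_Ioi] at hj; omega)
  have hrows : LinearIndependent F (fun i => M i) :=
    Matrix.linearIndependent_rows_iff_isUnit.2
      ((Matrix.isUnit_iff_isUnit_det M).2 (isUnit_iff_ne_zero.2 hdet))
  have hg : LinearIndependent F
      (fun i : {y // y ∈ s} => (fun t : Fin k => c i.1 * x i.1 ^ (t : ℕ))) :=
    (linearIndependent_equiv e).mp hrows
  have : LinearIndependent F
      ((LinearMap.funLeft F F (fun t : Fin k => Fin.castLE hs t)) ∘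
        (fun i : {y // y ∈ s} => (fun t : Fin a => c i.1 * x i.1 ^ (t : ℕ)))) := by
    convert hg using 1
    rfl
  exact this.of_comp _


open WeakSecureSummation in
/-- if `|F| > a * C(n, a)` with `1 ≤ a < n`, there exist vectors
`h_1,…,h_n ∈ F^a` summing to zero such that any subfamily of at most `a` of them
is linearly independent. -/
theorem exists_zero_sum_mds_vectors (F : Type) [Field F] [Fintype F]
    (a n : ℕ) (ha : 1 ≤ a) (han : a < n)
    (hF : a * n.choose a < Fintype.card F) :
    ∃ h : Fin n → (Fin a → F),
      (∑ i, h i = 0) ∧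
      ∀ s : Finset (Fin n), s.card ≤ a →
        LinearIndependent F (fun i : {x // x ∈ s} => h i.1) := by
  classical
  have hn : n < Fintype.card F := by
    have h1 : n ≤ a * n.choose a := by
      obtain ⟨m, rfl⟩ : ∃ m, n = m + 1 := ⟨n - 1, by omega⟩
      obtain ⟨b, rfl⟩ : ∃ b, a = b + 1 := ⟨a - 1, by omega⟩
      have h := Nat.add_one_mul_choose_eq m b
      have hpos : 0 < m.choose b := Nat.choose_pos (by omega)
      have hpos2 : 0 < (m + 1).choose (b + 1) := Nat.choose_pos (by omega)
      nlinarith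
    omega
  obtain ⟨x⟩ : Nonempty (Fin n ↪ F) := Function.Embedding.nonempty_of_card_le (by simpa using hn.le)
  have hx : Function.Injective x := x.injective
  set c : Fin n → F := fun i => (∏ j ∈ Finset.univ.erase i, (x i - x j))⁻¹ with hc
  have hcne : ∀ i, c i ≠ 0 := by
    intro i
    refine inv_ne_zero (Finset.prod_ne_zero_iff.2 fun j hj => ?_)
    rw [sub_ne_zero]
    exact fun h => (Finset.mem_erase.mp hj).1 (hx h).symm
  refine ⟨fun i => fun t => c i * x i ^ (t : ℕ), ?_, fun s hs => my_vandermonde_li x hx c hcne s hs⟩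
  funext t
  have hz := my_lagrange_sum_zero (Finset.univ : Finset (Fin n)) x hx.injOn t.1
    (by simp only [Finset.card_univ, Fintype.card_fin]; omega)
  simpa [Finset.sum_apply, mul_comm] using hz
end

section
/- Let K ≥ 2 and let (𝒮, 𝒯) be a security pattern with a* ≤ K−1, a* = |S̄| and |Q| < K. Then for every prime power q, the key rate a* is achievable: there exist L ≥ 1, L_X = L, L_Z = a*·L, and a scheme satisfying the independence, uniformity, message, correctness and security constraints with L_Z/L = a*. -/
open Finset
open scoped Classical

namespace Aux

open WeakSecureSummation

noncomputable section

/-- The uniform pmf. -/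
def up (Ω : Type*) [Fintype Ω] : Ω → ℝ := fun _ => (Fintype.card Ω : ℝ)⁻¹

section basic
variable {Ω : Type*} [Fintype Ω] {α : Type*} [Fintype α] [DecidableEq α]

lemma pr_up (X : Ω → α) (a : α) :
    pr (up Ω) X a = ((univ.filter fun ω => X ω = a).card : ℝ) / Fintype.card Ω := by
  classical
  rw [pr, ← Finset.sum_filter]
  simp [up, div_eq_mul_inv, mul_comm]

lemma H_comp_inj {β : Type*} [Fintype β] [DecidableEq β] (q : ℕ) (p : Ω → ℝ)
    (X : Ω → α) (e : α → β) (he : Function.Injective e) :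
    H q p (fun ω => e (X ω)) = H q p X := by
  classical
  have hpr : ∀ a : α, pr p (fun ω => e (X ω)) (e a) = pr p X a := by
    intro a
    unfold pr
    refine Finset.sum_congr rfl fun ω _ => ?_
    simp [he.eq_iff]
  have hpr0 : ∀ b : β, b ∉ univ.image e → pr p (fun ω => e (X ω)) b = 0 := by
    intro b hb
    unfold pr
    refine Finset.sum_eq_zero fun ω _ => ?_
    have : e (X ω) ≠ b := by
      intro h; exact hb (Finset.mem_image.2 ⟨X ω, Finset.mem_univ _, h⟩)
    simp [this]
  unfold H
  congr 1
  rw [← Finset.sum_subset (Finset.subset_univ (univ.image e))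
    (fun b _ hb => by rw [hpr0 b hb]; simp)]
  rw [Finset.sum_image (fun a _ a' _ h => he h)]
  exact Finset.sum_congr rfl fun a _ => by rw [hpr]

/-- Conditional entropy of a function of the conditioning variable is 0. -/
lemma Hc_comp (q : ℕ) (p : Ω → ℝ) {β : Type*} [Fintype β] [DecidableEq β]
    (Y : Ω → α) (f : α → β) :
    Hc q p (fun ω => f (Y ω)) Y = 0 := by
  unfold Hc
  have : (fun ω => (f (Y ω), Y ω)) = fun ω => (fun a => (f a, a)) (Y ω) := rfl
  rw [this, H_comp_inj q p Y (fun a => (f a, a)) (fun a b h => congrArg Prod.snd h)]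
  ring

end basic

section additive

variable {G : Type*} [AddCommGroup G] [Fintype G]
variable {A : Type*} [AddCommGroup A]

lemma add_map_zero (f : G → A) (hf : ∀ x y, f (x + y) = f x + f y) : f 0 = 0 := by
  have h := (hf 0 0).symm
  simpa using h

lemma add_map_neg (f : G → A) (hf : ∀ x y, f (x + y) = f x + f y) (x : G) :
    f (-x) = -f x := by
  have h := hf x (-x)
  rw [add_neg_cancel, add_map_zero f hf] at h
  have h2 : f (-x) + f x = 0 := by rw [add_comm]; exact h.symm
  exact eq_neg_of_add_eq_zero_left h2

lemma add_map_sub (f : G → A) (hf : ∀ x y, f (x + y) = f x + f y) (x y : G) :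
    f (x - y) = f x - f y := by
  rw [sub_eq_add_neg, hf, add_map_neg f hf, sub_eq_add_neg]

variable [Fintype A] [DecidableEq A]

lemma fiber_card (f : G → A) (hf : ∀ x y, f (x + y) = f x + f y) (x0 : G) :
    (univ.filter fun ω => f ω = f x0).card = (univ.filter fun ω => f ω = 0).card := by
  classical
  apply Finset.card_bij' (fun ω _ => ω - x0) (fun ω _ => ω + x0)
  · intro ω hω
    rw [Finset.mem_filter] at hω ⊢
    refine ⟨Finset.mem_univ _, ?_⟩
    rw [add_map_sub f hf, hω.2, sub_self]
  · intro ω hω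
    rw [Finset.mem_filter] at hω ⊢
    refine ⟨Finset.mem_univ _, ?_⟩
    rw [hf, hω.2, zero_add]
  · intro ω _; abel
  · intro ω _; abel

lemma card_pos_zero (f : G → A) (hf : ∀ x y, f (x + y) = f x + f y) :
    0 < (univ.filter fun ω => f ω = 0).card := by
  refine Finset.card_pos.2 ⟨0, ?_⟩
  simp [add_map_zero f hf]

lemma card_mul_image (f : G → A) (hf : ∀ x y, f (x + y) = f x + f y) :
    Fintype.card G = (univ.image f).card * (univ.filter fun ω => f ω = 0).card := by
  classical
  have h1 : (univ : Finset G).card = ∑ b ∈ univ.image f, (univ.filter fun a => f a = b).card :=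
    Finset.card_eq_sum_card_fiberwise (fun x _ => Finset.mem_image_of_mem f (Finset.mem_univ x))
  rw [Fintype.card, h1]
  rw [Finset.sum_congr rfl (fun b hb => ?_), Finset.sum_const, smul_eq_mul]
  obtain ⟨x0, _, hx0⟩ := Finset.mem_image.1 hb
  rw [← hx0]
  exact fiber_card f hf x0

lemma H_additive (q : ℕ) (f : G → A) (hf : ∀ x y, f (x + y) = f x + f y) :
    H q (up G) f =
      (Real.log (Fintype.card G) - Real.log ((univ.filter fun ω => f ω = 0).card)) /
        Real.log q := by
  classical
  set c : ℕ := (univ.filter fun ω => f ω = 0).card with hc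
  set n : ℕ := Fintype.card G with hn
  have hcpos : 0 < c := card_pos_zero f hf
  have hnpos : 0 < n := Fintype.card_pos
  have hprmem : ∀ b ∈ univ.image f, pr (up G) f b = (c : ℝ) / n := by
    intro b hb
    obtain ⟨x0, _, hx0⟩ := Finset.mem_image.1 hb
    rw [pr_up, ← hx0, fiber_card f hf x0]
  have hpr0 : ∀ b ∉ univ.image f, pr (up G) f b = 0 := by
    intro b hb
    rw [pr_up]
    have : (univ.filter fun ω => f ω = b) = ∅ := by
      refine Finset.filter_eq_empty_iff.2 fun ω _ => ?_
      intro h; exact hb (Finset.mem_image.2 ⟨ω, Finset.mem_univ _, h⟩)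
    rw [this]; simp
  have hcne : (c : ℝ) ≠ 0 := Nat.cast_ne_zero.2 hcpos.ne'
  have hnne : (n : ℝ) ≠ 0 := Nat.cast_ne_zero.2 hnpos.ne'
  have himc : ((univ.image f).card : ℝ) = (n : ℝ) / c := by
    have h := card_mul_image f hf
    rw [← hn, ← hc] at h
    have hmul : (n : ℝ) = ((univ.image f).card : ℝ) * c := by exact_mod_cast h
    rw [eq_div_iff hcne]
    exact hmul.symm
  unfold H
  rw [← Finset.sum_subset (Finset.subset_univ (univ.image f))
    (fun b _ hb => by rw [hpr0 b hb]; simp)]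
  rw [Finset.sum_congr rfl (fun b hb => by rw [hprmem b hb])]
  rw [Finset.sum_const, nsmul_eq_mul, himc, Real.log_div hcne hnne]
  rw [← mul_assoc]
  have h1 : (n : ℝ) / c * ((c : ℝ) / n) = 1 := by field_simp
  rw [h1, one_mul, ← neg_div, neg_sub]

end additive

section additive2

variable {G : Type*} [AddCommGroup G] [Fintype G]

lemma pr_surj {A : Type*} [AddCommGroup A] [Fintype A] [DecidableEq A]
    (f : G → A) (hf : ∀ x y, f (x + y) = f x + f y) (hs : Function.Surjective f) (a : A) :
    pr (up G) f a = ((Fintype.card A : ℝ))⁻¹ := by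
  classical
  obtain ⟨x0, hx0⟩ := hs a
  rw [pr_up, ← hx0, fiber_card f hf x0]
  have him : univ.image f = univ := Finset.image_univ_of_surjective hs
  have h := card_mul_image f hf
  rw [him, Finset.card_univ] at h
  rw [h]
  have h1 : ((univ.filter fun ω => f ω = 0).card : ℝ) ≠ 0 :=
    Nat.cast_ne_zero.2 (card_pos_zero f hf).ne'
  have h2 : (Fintype.card A : ℝ) ≠ 0 := Nat.cast_ne_zero.2 Fintype.card_pos.ne'
  push_cast
  rw [div_eq_iff (by positivity), inv_mul_eq_div, eq_div_iff h2]
  ring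

lemma Hc_additive (q : ℕ) {A B : Type*} [AddCommGroup A] [Fintype A] [DecidableEq A]
    [AddCommGroup B] [Fintype B] [DecidableEq B]
    (X : G → A) (Z : G → B)
    (hX : ∀ x y, X (x + y) = X x + X y) (hZ : ∀ x y, Z (x + y) = Z x + Z y) :
    Hc q (up G) X Z =
      (Real.log ((univ.filter fun ω => Z ω = 0).card) -
        Real.log ((univ.filter fun ω => X ω = 0 ∧ Z ω = 0).card)) / Real.log q := by
  classical
  have hpair : ∀ x y : G, (fun ω => (X ω, Z ω)) (x + y)
      = (fun ω => (X ω, Z ω)) x + (fun ω => (X ω, Z ω)) y := by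
    intro x y; simp [hX, hZ, Prod.ext_iff]
  unfold Hc
  rw [H_additive q _ hpair, H_additive q Z hZ]
  have hset : (univ.filter fun ω => (fun ω => (X ω, Z ω)) ω = 0)
      = (univ.filter fun ω => X ω = 0 ∧ Z ω = 0) := by
    refine Finset.filter_congr fun ω _ => ?_
    simp [Prod.ext_iff]
  rw [hset]
  ring

lemma MIc_zero_of_card (q : ℕ) {A B C : Type*}
    [AddCommGroup A] [Fintype A] [DecidableEq A]
    [AddCommGroup B] [Fintype B] [DecidableEq B]
    [AddCommGroup C] [Fintype C] [DecidableEq C]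
    (X : G → A) (Y : G → B) (Z : G → C)
    (hX : ∀ x y, X (x + y) = X x + X y) (hY : ∀ x y, Y (x + y) = Y x + Y y)
    (hZ : ∀ x y, Z (x + y) = Z x + Z y)
    (hcard : (univ.filter fun ω => X ω = 0 ∧ Z ω = 0).card *
        (univ.filter fun ω => Y ω = 0 ∧ Z ω = 0).card =
      (univ.filter fun ω => Z ω = 0).card *
        (univ.filter fun ω => X ω = 0 ∧ Y ω = 0 ∧ Z ω = 0).card) :
    MIc q (up G) X Y Z = 0 := by
  classical
  have hXY : ∀ x y : G, (fun ω => (X ω, Y ω)) (x + y)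
      = (fun ω => (X ω, Y ω)) x + (fun ω => (X ω, Y ω)) y := by
    intro x y; simp [hX, hY, Prod.ext_iff]
  unfold MIc
  rw [Hc_additive q X Z hX hZ, Hc_additive q Y Z hY hZ, Hc_additive q _ Z hXY hZ]
  have hset : (univ.filter fun ω => (fun ω => (X ω, Y ω)) ω = 0 ∧ Z ω = 0)
      = (univ.filter fun ω => X ω = 0 ∧ Y ω = 0 ∧ Z ω = 0) := by
    refine Finset.filter_congr fun ω _ => ?_
    simp [Prod.ext_iff, and_assoc]
  rw [hset]
  -- positivity of the four cardinalities
  have cXZ : 0 < (univ.filter fun ω => X ω = 0 ∧ Z ω = 0).card :=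
    Finset.card_pos.2 ⟨0, by simp [add_map_zero X hX, add_map_zero Z hZ]⟩
  have cYZ : 0 < (univ.filter fun ω => Y ω = 0 ∧ Z ω = 0).card :=
    Finset.card_pos.2 ⟨0, by simp [add_map_zero Y hY, add_map_zero Z hZ]⟩
  have cZ : 0 < (univ.filter fun ω => Z ω = 0).card :=
    Finset.card_pos.2 ⟨0, by simp [add_map_zero Z hZ]⟩
  have cXYZ : 0 < (univ.filter fun ω => X ω = 0 ∧ Y ω = 0 ∧ Z ω = 0).card :=
    Finset.card_pos.2 ⟨0, by simp [add_map_zero X hX, add_map_zero Y hY, add_map_zero Z hZ]⟩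
  have hlog : Real.log ((univ.filter fun ω => X ω = 0 ∧ Z ω = 0).card) +
      Real.log ((univ.filter fun ω => Y ω = 0 ∧ Z ω = 0).card) =
      Real.log ((univ.filter fun ω => Z ω = 0).card) +
      Real.log ((univ.filter fun ω => X ω = 0 ∧ Y ω = 0 ∧ Z ω = 0).card) := by
    rw [← Real.log_mul (Nat.cast_ne_zero.2 cXZ.ne') (Nat.cast_ne_zero.2 cYZ.ne'),
      ← Real.log_mul (Nat.cast_ne_zero.2 cZ.ne') (Nat.cast_ne_zero.2 cXYZ.ne'),
      ← Nat.cast_mul, ← Nat.cast_mul, hcard]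
  rw [← add_div, ← sub_div]
  rw [show ∀ a b c d e f : ℝ, a - b + (c - d) - (e - f) = (a + c + f) - (b + d + e) by intros; ring]
  rw [sub_div]
  have : Real.log ↑(univ.filter fun ω => Z ω = 0).card +
      Real.log ↑(univ.filter fun ω => Z ω = 0).card +
      Real.log ↑(univ.filter fun ω => X ω = 0 ∧ Y ω = 0 ∧ Z ω = 0).card =
      Real.log ↑(univ.filter fun ω => X ω = 0 ∧ Z ω = 0).card +
      Real.log ↑(univ.filter fun ω => Y ω = 0 ∧ Z ω = 0).card +
      Real.log ↑(univ.filter fun ω => Z ω = 0).card := by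
    linarith [hlog]
  rw [this, sub_self]

/-- The key counting identity, from an explicit decomposition map. -/
lemma card_identity {A B C : Type*} [AddCommGroup A] [AddCommGroup B] [AddCommGroup C]
    [DecidableEq A] [DecidableEq B] [DecidableEq C] (X : G → A) (Y : G → B) (Z : G → C)
    (hX : ∀ x y, X (x + y) = X x + X y) (hY : ∀ x y, Y (x + y) = Y x + Y y)
    (hZ : ∀ x y, Z (x + y) = Z x + Z y)
    (d : G → G) (hd : ∀ x y, d (x + y) = d x + d y)
    (hdY : ∀ g, Z g = 0 → Y (d g) = 0)
    (hdZ : ∀ g, Z g = 0 → Z (d g) = 0)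
    (hdX : ∀ g, Z g = 0 → X (g - d g) = 0)
    (hd0 : ∀ g, X g = 0 → d g = 0) :
    (univ.filter fun ω => X ω = 0 ∧ Z ω = 0).card *
      (univ.filter fun ω => Y ω = 0 ∧ Z ω = 0).card =
    (univ.filter fun ω => Z ω = 0).card *
      (univ.filter fun ω => X ω = 0 ∧ Y ω = 0 ∧ Z ω = 0).card := by
  classical
  have key : Fintype.card ({ω : G // X ω = 0 ∧ Z ω = 0} × {ω : G // Y ω = 0 ∧ Z ω = 0})
      = Fintype.card ({ω : G // Z ω = 0} × {ω : G // X ω = 0 ∧ Y ω = 0 ∧ Z ω = 0}) := by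
    apply Fintype.card_congr
    refine
      { toFun := fun ab => ⟨⟨ab.1.1 + ab.2.1, ?_⟩, ⟨d (ab.1.1 + ab.2.1) - ab.2.1, ?_, ?_, ?_⟩⟩
        invFun := fun gh => ⟨⟨gh.1.1 - d gh.1.1 + gh.2.1, ?_, ?_⟩,
          ⟨d gh.1.1 - gh.2.1, ?_, ?_⟩⟩
        left_inv := ?_
        right_inv := ?_ }
    · rw [hZ, ab.1.2.2, ab.2.2.2, add_zero]
    · -- X (d (a+b) - b) = 0
      have hda : d ab.1.1 = 0 := hd0 _ ab.1.2.1
      rw [hd, hda, zero_add]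
      have := hdX ab.2.1 ab.2.2.2
      have h2 : X (d ab.2.1 - ab.2.1) = - X (ab.2.1 - d ab.2.1) := by
        rw [← add_map_neg X hX, neg_sub]
      rw [h2, this, neg_zero]
    · -- Y (d (a+b) - b) = 0
      have hzab : Z (ab.1.1 + ab.2.1) = 0 := by rw [hZ, ab.1.2.2, ab.2.2.2, add_zero]
      rw [add_map_sub Y hY, hdY _ hzab, ab.2.2.1, sub_zero]
    · -- Z (d (a+b) - b) = 0
      have hzab : Z (ab.1.1 + ab.2.1) = 0 := by rw [hZ, ab.1.2.2, ab.2.2.2, add_zero]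
      rw [add_map_sub Z hZ, hdZ _ hzab, ab.2.2.2, sub_zero]
    · -- X (g - d g + h) = 0
      rw [hX, hdX _ gh.1.2, gh.2.2.1, add_zero]
    · -- Z (g - d g + h) = 0
      rw [hZ, add_map_sub Z hZ, hdZ _ gh.1.2, gh.1.2, gh.2.2.2.2]
      simp
    · -- Y (d g - h) = 0
      rw [add_map_sub Y hY, hdY _ gh.1.2, gh.2.2.2.1, sub_zero]
    · -- Z (d g - h) = 0
      rw [add_map_sub Z hZ, hdZ _ gh.1.2, gh.2.2.2.2, sub_zero]
    · intro ab
      refine Prod.ext (Subtype.ext ?_) (Subtype.ext ?_)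
      · show ab.1.1 + ab.2.1 - d (ab.1.1 + ab.2.1) + (d (ab.1.1 + ab.2.1) - ab.2.1) = ab.1.1
        abel
      · show d (ab.1.1 + ab.2.1) - (d (ab.1.1 + ab.2.1) - ab.2.1) = ab.2.1
        abel
    · intro gh
      refine Prod.ext (Subtype.ext ?_) (Subtype.ext ?_)
      · show gh.1.1 - d gh.1.1 + gh.2.1 + (d gh.1.1 - gh.2.1) = gh.1.1
        abel
      · show d (gh.1.1 - d gh.1.1 + gh.2.1 + (d gh.1.1 - gh.2.1)) - (d gh.1.1 - gh.2.1) = gh.2.1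
        have harg : gh.1.1 - d gh.1.1 + gh.2.1 + (d gh.1.1 - gh.2.1) = gh.1.1 := by abel
        rw [harg]
        abel
  rw [Fintype.card_prod, Fintype.card_prod] at key
  rw [Fintype.card_subtype, Fintype.card_subtype, Fintype.card_subtype, Fintype.card_subtype] at key
  exact key

end additive2

end
end Aux

namespace Conc

open WeakSecureSummation Aux

noncomputable section

variable {K M N : ℕ} (P : Pattern K M N) (F : Type) [Field F] [Fintype F] [DecidableEq F]

/-- The sample space: inputs and one pad per element of `S̄`. -/
abbrev Om := (Fin K → F) × ({x // x ∈ P.Sbar} → F)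

/-- The pad added to user `k`'s input in its message. -/
def Pad (u : Fin K) (z : {x // x ∈ P.Sbar} → F) : Fin K → F := fun k =>
  if hk : k ∈ P.Sbar then z ⟨k, hk⟩ else if k = u then -∑ j, z j else 0

lemma Pad_add (u : Fin K) (z z' : {x // x ∈ P.Sbar} → F) (k : Fin K) :
    Pad P F u (z + z') k = Pad P F u z k + Pad P F u z' k := by
  unfold Pad
  split_ifs <;> simp [Finset.sum_add_distrib] <;> ring

lemma Pad_sum (u : Fin K) (hu : u ∉ P.Sbar) (z : {x // x ∈ P.Sbar} → F) :
    ∑ k, Pad P F u z k = 0 := by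
  unfold Pad
  rw [← Finset.sum_filter_add_sum_filter_not univ (· ∈ P.Sbar)]
  have h1 : ∑ k ∈ univ.filter (· ∈ P.Sbar),
      (if hk : k ∈ P.Sbar then z ⟨k, hk⟩ else if k = u then -∑ j, z j else 0)
      = ∑ k ∈ P.Sbar.attach, z k := by
    rw [Finset.filter_univ_mem]
    rw [← Finset.sum_attach P.Sbar
      (fun k => if hk : k ∈ P.Sbar then z ⟨k, hk⟩ else if k = u then -∑ j, z j else 0)]
    refine Finset.sum_congr rfl fun k _ => ?_
    rw [dif_pos k.2]
  have h2 : ∑ k ∈ univ.filter (· ∉ P.Sbar),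
      (if hk : k ∈ P.Sbar then z ⟨k, hk⟩ else if k = u then -∑ j, z j else 0)
      = -∑ j, z j := by
    rw [Finset.sum_congr rfl (fun k hk => ?_), Finset.sum_ite_eq' (univ.filter (· ∉ P.Sbar)) u
      (fun _ => -∑ j, z j)]
    · rw [if_pos (by simp [hu])]
    · rw [Finset.mem_filter] at hk
      rw [dif_neg hk.2]
  rw [h1, h2]
  have : ∑ k ∈ P.Sbar.attach, z k = ∑ j, z j := by
    congr 1
  rw [this]
  ring

/-- The scheme. -/
@[reducible] def Cons (u : Fin K) : Scheme K F where
  L := 1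
  LX := 1
  LZ := P.Sbar.card
  Ω := Om P F
  p := up (Om P F)
  W := fun k ω _ => ω.1 k
  ZS := fun ω i => ω.2 (P.Sbar.equivFin.symm i)
  ZT := fun _ => F
  Z := fun k ω => Pad P F u ω.2 k
  X := fun k ω _ => ω.1 k + Pad P F u ω.2 k

end
end Conc

namespace Conc2

open WeakSecureSummation Aux Conc

noncomputable section

variable {K M N : ℕ} (P : Pattern K M N) (F : Type) [Field F] [Fintype F] [DecidableEq F]

/-- The input part of the decomposition map. -/
def dW (S' : Finset (Fin K)) (c : Fin K) (w : Fin K → F) : Fin K → F :=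
  fun k => if k ∈ S' then w k else if k = c then -∑ j ∈ S', w j else 0

/-- The decomposition map used in the security proof. -/
def dmap (S' : Finset (Fin K)) (c : Fin K) : Om P F → Om P F :=
  fun ω => (dW F S' c ω.1, fun j => -dW F S' c ω.1 j.1)

lemma dW_add (S' : Finset (Fin K)) (c : Fin K) (w w' : Fin K → F) (k : Fin K) :
    dW F S' c (w + w') k = dW F S' c w k + dW F S' c w' k := by
  unfold dW
  split_ifs <;> simp [Finset.sum_add_distrib] <;> ring

lemma dW_sum (S' : Finset (Fin K)) (c : Fin K) (hc : c ∉ S') (w : Fin K → F) :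
    ∑ k, dW F S' c w k = 0 := by
  unfold dW
  rw [← Finset.sum_filter_add_sum_filter_not univ (· ∈ S')]
  have h1 : ∑ k ∈ univ.filter (· ∈ S'),
      (if k ∈ S' then w k else if k = c then -∑ j ∈ S', w j else 0) = ∑ k ∈ S', w k := by
    rw [Finset.filter_univ_mem]
    exact Finset.sum_congr rfl fun k hk => if_pos hk
  have h2 : ∑ k ∈ univ.filter (· ∉ S'),
      (if k ∈ S' then w k else if k = c then -∑ j ∈ S', w j else 0) = -∑ j ∈ S', w j := by
    rw [Finset.sum_congr rfl (fun k hk => ?_),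
      Finset.sum_ite_eq' (univ.filter (· ∉ S')) c (fun _ => -∑ j ∈ S', w j)]
    · rw [if_pos (by simp [hc])]
    · rw [Finset.mem_filter] at hk
      rw [if_neg hk.2]
  rw [h1, h2]
  ring

lemma dW_sum_Sbar (S' : Finset (Fin K)) (c : Fin K) (hc : c ∉ S') (hS : S' ⊆ P.Sbar)
    (w : Fin K → F) :
    ∑ k ∈ P.Sbar, dW F S' c w k = if c ∈ P.Sbar then 0 else ∑ j ∈ S', w j := by
  unfold dW
  rw [← Finset.sum_filter_add_sum_filter_not P.Sbar (· ∈ S')]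
  have hfil : P.Sbar.filter (· ∈ S') = S' := by
    ext x
    simp only [Finset.mem_filter]
    exact ⟨fun h => h.2, fun h => ⟨hS h, h⟩⟩
  have h1 : ∑ k ∈ P.Sbar.filter (· ∈ S'),
      (if k ∈ S' then w k else if k = c then -∑ j ∈ S', w j else 0) = ∑ k ∈ S', w k := by
    rw [hfil]
    exact Finset.sum_congr rfl fun k hk => if_pos hk
  have h2 : ∑ k ∈ P.Sbar.filter (· ∉ S'),
      (if k ∈ S' then w k else if k = c then -∑ j ∈ S', w j else 0)
      = if c ∈ P.Sbar then -∑ j ∈ S', w j else 0 := by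
    rw [Finset.sum_congr rfl (fun k hk => ?_),
      Finset.sum_ite_eq' (P.Sbar.filter (· ∉ S')) c (fun _ => -∑ j ∈ S', w j)]
    · congr 1
      simp only [Finset.mem_filter]
      exact propext ⟨fun h => h.1, fun h => ⟨h, hc⟩⟩
    · rw [Finset.mem_filter] at hk
      rw [if_neg hk.2]
  rw [h1, h2]
  split_ifs <;> ring

lemma Pad_dmap (u : Fin K) (S' : Finset (Fin K)) (c : Fin K) (w : Fin K → F) (k : Fin K) :
    Pad P F u (fun j => -dW F S' c w j.1) k =
      if k ∈ P.Sbar then -dW F S' c w k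
      else if k = u then ∑ j ∈ P.Sbar, dW F S' c w j else 0 := by
  unfold Pad
  by_cases hk : k ∈ P.Sbar
  · rw [dif_pos hk, if_pos hk]
  · rw [dif_neg hk, if_neg hk]
    by_cases hku : k = u
    · rw [if_pos hku, if_pos hku]
      rw [← Finset.sum_attach P.Sbar (fun j => dW F S' c w j)]
      rw [show (∑ j : {x // x ∈ P.Sbar}, -dW F S' c w j.1)
          = -∑ j ∈ P.Sbar.attach, dW F S' c w j.1 by rw [← Finset.sum_neg_distrib]; rfl]
      ring
    · rw [if_neg hku, if_neg hku]

end
end Conc2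

namespace Conc3

open WeakSecureSummation Aux Conc Conc2

noncomputable section

variable {K M N : ℕ} (P : Pattern K M N) (F : Type) [Field F] [Fintype F] [DecidableEq F]
variable (u : Fin K)

lemma Wtup_zero (S' : Finset (Fin K)) (ω : Om P F) :
    (Cons P F u).Wtup S' ω = 0 ↔ ∀ k ∈ S', ω.1 k = 0 := by
  constructor
  · intro h k hk
    exact congrFun (congrFun h ⟨k, hk⟩) 0
  · intro h
    funext k i
    exact h k.1 k.2

lemma Xall_zero (ω : Om P F) :
    (Cons P F u).Xall ω = 0 ↔ ∀ k, ω.1 k + Pad P F u ω.2 k = 0 := by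
  constructor
  · intro h k
    exact congrFun (congrFun h k) 0
  · intro h
    funext k i
    exact h k

lemma Zc_zero (T' : Finset (Fin K)) (ω : Om P F) :
    ((Cons P F u).sumW ω, (Cons P F u).WZtup T' ω) = 0 ↔
      (∑ k, ω.1 k = 0) ∧ ∀ k ∈ T', ω.1 k = 0 ∧ Pad P F u ω.2 k = 0 := by
  rw [Prod.mk_eq_zero]
  constructor
  · rintro ⟨h1, h2⟩
    constructor
    · have h3 := congrFun h1 0
      rw [Scheme.sumW, Finset.sum_apply] at h3
      exact h3
    · intro k hk
      have h3 : ((Cons P F u).W k ω, (Cons P F u).Z k ω) = 0 := congrFun h2 ⟨k, hk⟩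
      rw [Prod.mk_eq_zero] at h3
      exact ⟨congrFun h3.1 0, h3.2⟩
  · rintro ⟨h1, h2⟩
    constructor
    · funext i
      rw [Scheme.sumW, Finset.sum_apply]
      exact h1
    · funext k
      show ((Cons P F u).W k.1 ω, (Cons P F u).Z k.1 ω) = 0
      rw [Prod.mk_eq_zero]
      exact ⟨funext fun i => (h2 k.1 k.2).1, (h2 k.1 k.2).2⟩

lemma Wtup_add (S' : Finset (Fin K)) (x y : Om P F) :
    (Cons P F u).Wtup S' (x + y) = (Cons P F u).Wtup S' x + (Cons P F u).Wtup S' y := rfl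

lemma Xall_add (x y : Om P F) :
    (Cons P F u).Xall (x + y) = (Cons P F u).Xall x + (Cons P F u).Xall y := by
  funext k i
  show (x + y).1 k + Pad P F u (x + y).2 k
      = (x.1 k + Pad P F u x.2 k) + (y.1 k + Pad P F u y.2 k)
  rw [show (x + y).2 = x.2 + y.2 from rfl, Pad_add]
  show x.1 k + y.1 k + _ = _
  ring

lemma sumW_add (x y : Om P F) :
    (Cons P F u).sumW (x + y) = (Cons P F u).sumW x + (Cons P F u).sumW y := by
  funext i
  rw [Scheme.sumW, Finset.sum_apply, Pi.add_apply, Scheme.sumW, Scheme.sumW,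
    Finset.sum_apply, Finset.sum_apply, ← Finset.sum_add_distrib]
  rfl

lemma Zc_add (T' : Finset (Fin K)) (x y : Om P F) :
    ((Cons P F u).sumW (x + y), (Cons P F u).WZtup T' (x + y))
      = ((Cons P F u).sumW x, (Cons P F u).WZtup T' x)
        + ((Cons P F u).sumW y, (Cons P F u).WZtup T' y) := by
  have h1 : (Cons P F u).WZtup T' (x + y)
      = (Cons P F u).WZtup T' x + (Cons P F u).WZtup T' y := by
    funext k
    refine Prod.ext_iff.2 ⟨rfl, ?_⟩
    show Pad P F u (x + y).2 k.1 = Pad P F u x.2 k.1 + Pad P F u y.2 k.1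
    rw [show (x + y).2 = x.2 + y.2 from rfl, Pad_add]
  rw [sumW_add, h1]
  rfl

lemma dmap_add (S' : Finset (Fin K)) (c : Fin K) (x y : Om P F) :
    dmap P F S' c (x + y) = dmap P F S' c x + dmap P F S' c y := by
  unfold dmap
  have h1 : dW F S' c (x + y).1 = dW F S' c x.1 + dW F S' c y.1 := by
    funext k
    rw [show (x + y).1 = x.1 + y.1 from rfl, dW_add]
    rfl
  rw [h1]
  refine Prod.ext_iff.2 ⟨rfl, ?_⟩
  funext j
  show -((dW F S' c x.1 + dW F S' c y.1) j.1) = -dW F S' c x.1 j.1 + -dW F S' c y.1 j.1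
  show -(dW F S' c x.1 j.1 + dW F S' c y.1 j.1) = _
  ring

end
end Conc3

namespace Conc4

open WeakSecureSummation Aux Conc Conc2 Conc3

noncomputable section

variable {K M N : ℕ} (P : Pattern K M N) (F : Type) [Field F] [Fintype F] [DecidableEq F]

lemma dW_T (c : Fin K) (S' T' : Finset (Fin K)) (hcT : c ∉ T') (w : Fin K → F)
    (hT : ∀ k ∈ T', w k = 0) (k : Fin K) (hk : k ∈ T') : dW F S' c w k = 0 := by
  unfold dW
  by_cases h1 : k ∈ S'
  · rw [if_pos h1]; exact hT k hk
  · rw [if_neg h1, if_neg (fun h => hcT (by rw [← h]; exact hk))]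

lemma hdY_raw (u c : Fin K) (S' : Finset (Fin K)) (hS : S' ⊆ P.Sbar) (hu : u ∉ P.Sbar)
    (hcS : c ∉ S') (hcu : c ∈ P.Sbar ∨ c = u) (w : Fin K → F) (k : Fin K) :
    dW F S' c w k + Pad P F u (fun j => -dW F S' c w j.1) k = 0 := by
  rw [Pad_dmap]
  by_cases hk : k ∈ P.Sbar
  · rw [if_pos hk]; ring
  · rw [if_neg hk]
    by_cases hku : k = u
    · rw [if_pos hku, dW_sum_Sbar P F S' c hcS hS w]
      rcases hcu with hc | hc
      · rw [if_pos hc]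
        have h1 : dW F S' c w k = 0 := by
          unfold dW
          rw [if_neg (fun h => hk (hS h)), if_neg (fun h => hk (by rw [h]; exact hc))]
        rw [h1, add_zero]
      · rw [if_neg (show c ∉ P.Sbar by rw [hc]; exact hu)]
        have h1 : dW F S' c w k = -∑ j ∈ S', w j := by
          unfold dW
          rw [if_neg (fun h => hk (hS h)), if_pos (hku.trans hc.symm)]
        rw [h1]; ring
    · rw [if_neg hku, add_zero]
      unfold dW
      rw [if_neg (fun h => hk (hS h)), if_neg]
      intro h
      rcases hcu with hc | hc
      · exact hk (by rw [h]; exact hc)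
      · exact hku (h.trans hc)

lemma hdZ_raw (u c : Fin K) (S' T' : Finset (Fin K)) (hS : S' ⊆ P.Sbar) (hu : u ∉ P.Sbar)
    (hcS : c ∉ S') (hcT : c ∉ T') (hcu : c ∈ P.Sbar ∨ c = u) (w : Fin K → F)
    (hT : ∀ k ∈ T', w k = 0) :
    (∑ k, dW F S' c w k = 0) ∧
      ∀ k ∈ T', dW F S' c w k = 0 ∧ Pad P F u (fun j => -dW F S' c w j.1) k = 0 := by
  refine ⟨dW_sum F S' c hcS w, fun k hk => ⟨dW_T F c S' T' hcT w hT k hk, ?_⟩⟩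
  rw [Pad_dmap]
  by_cases h2 : k ∈ P.Sbar
  · rw [if_pos h2, dW_T F c S' T' hcT w hT k hk, neg_zero]
  · rw [if_neg h2]
    by_cases h3 : k = u
    · rw [if_pos h3]
      rcases hcu with hc | hc
      · rw [dW_sum_Sbar P F S' c hcS hS w, if_pos hc]
      · exact absurd (show c ∈ T' by rw [hc, ← h3]; exact hk) hcT
    · rw [if_neg h3]

set_option maxHeartbeats 2000000 in
lemma secure_pair (u c : Fin K) (m : Fin M) (n : Fin N)
    (hu : u ∉ P.Sbar) (hS : P.S m ⊆ P.Sbar)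
    (hcS : c ∉ P.S m) (hcT : c ∉ P.T n) (hcu : c ∈ P.Sbar ∨ c = u) :
    (Cons P F u).SecureFor (P.S m) (P.T n) := by
  unfold Scheme.SecureFor
  apply MIc_zero_of_card (Fintype.card F) ((Cons P F u).Wtup (P.S m)) ((Cons P F u).Xall)
    (fun ω => ((Cons P F u).sumW ω, (Cons P F u).WZtup (P.T n) ω))
    (Wtup_add P F u (P.S m)) (Xall_add P F u) (Zc_add P F u (P.T n))
  apply card_identity ((Cons P F u).Wtup (P.S m)) ((Cons P F u).Xall)
    (fun ω => ((Cons P F u).sumW ω, (Cons P F u).WZtup (P.T n) ω))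
    (Wtup_add P F u (P.S m)) (Xall_add P F u) (Zc_add P F u (P.T n))
    (dmap P F (P.S m) c) (dmap_add P F (P.S m) c)
  · -- hdY
    intro g _
    rw [Xall_zero]
    exact fun k => hdY_raw P F u c (P.S m) hS hu hcS hcu g.1 k
  · -- hdZ
    intro g hg
    rw [Zc_zero] at hg ⊢
    exact hdZ_raw P F u c (P.S m) (P.T n) hS hu hcS hcT hcu g.1
      (fun k hk => (hg.2 k hk).1)
  · -- hdX
    intro g _
    rw [Wtup_zero]
    intro k hk
    show g.1 k - dW F (P.S m) c g.1 k = 0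
    have h1 : dW F (P.S m) c g.1 k = g.1 k := by unfold dW; rw [if_pos hk]
    rw [h1, sub_self]
  · -- hd0
    intro g hg
    rw [Wtup_zero] at hg
    have hw : dW F (P.S m) c g.1 = 0 := by
      funext k
      show dW F (P.S m) c g.1 k = (0 : F)
      unfold dW
      by_cases h1 : k ∈ P.S m
      · rw [if_pos h1]; exact hg k h1
      · rw [if_neg h1]
        by_cases hc2 : k = c
        · rw [if_pos hc2, Finset.sum_eq_zero (fun j hj => hg j hj), neg_zero]
        · rw [if_neg hc2]
    show (dW F (P.S m) c g.1, fun j : {x // x ∈ P.Sbar} => -dW F (P.S m) c g.1 j.1) = 0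
    rw [hw]
    refine Prod.ext_iff.2 ⟨rfl, ?_⟩
    funext j
    show -(0 : Fin K → F) j.1 = (0 : F)
    simp

end
end Conc4

namespace Conc5

open WeakSecureSummation Aux Conc

noncomputable section

variable {K M N : ℕ} (P : Pattern K M N) (F : Type) [Field F] [Fintype F] [DecidableEq F]

lemma fin1_eq_zero (i : Fin 1) : i = 0 := by
  apply Fin.ext
  omega

lemma validP (u : Fin K) : (Cons P F u).ValidP := by
  have hne : Nonempty (Om P F) := ⟨0⟩
  constructor
  · intro ω
    show (0 : ℝ) ≤ (Fintype.card (Om P F) : ℝ)⁻¹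
    positivity
  · show ∑ _ω : Om P F, (Fintype.card (Om P F) : ℝ)⁻¹ = 1
    rw [Finset.sum_const, Finset.card_univ, nsmul_eq_mul]
    rw [mul_inv_cancel₀]
    exact Nat.cast_ne_zero.2 Fintype.card_pos.ne'

lemma W_surj (u : Fin K) (k : Fin K) : Function.Surjective ((Cons P F u).W k) := by
  intro a
  refine ⟨(fun j => if j = k then a 0 else 0, 0), funext fun i => ?_⟩
  show (if k = k then a 0 else 0) = a i
  rw [if_pos rfl, fin1_eq_zero i]

lemma Wall_surj (u : Fin K) : Function.Surjective (Cons P F u).Wall := by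
  intro w
  refine ⟨(fun j => w j 0, 0), funext fun k => funext fun i => ?_⟩
  show w k 0 = w k i
  rw [fin1_eq_zero i]

lemma ZS_surj (u : Fin K) : Function.Surjective (Cons P F u).ZS := by
  intro z
  refine ⟨(0, fun s => z (P.Sbar.equivFin s)), funext fun i => ?_⟩
  show z (P.Sbar.equivFin (P.Sbar.equivFin.symm i)) = z i
  rw [Equiv.apply_symm_apply]

lemma WallZS_surj (u : Fin K) :
    Function.Surjective (fun ω => ((Cons P F u).Wall ω, (Cons P F u).ZS ω)) := by
  rintro ⟨w, z⟩
  refine ⟨(fun j => w j 0, fun s => z (P.Sbar.equivFin s)), ?_⟩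
  refine Prod.ext_iff.2 ⟨funext fun k => funext fun i => ?_, funext fun i => ?_⟩
  · show w k 0 = w k i
    rw [fin1_eq_zero i]
  · show z (P.Sbar.equivFin (P.Sbar.equivFin.symm i)) = z i
    rw [Equiv.apply_symm_apply]

lemma indepUnif (u : Fin K) : (Cons P F u).IndepUnif := by
  refine ⟨?_, ?_, ?_⟩
  · intro k a
    rw [pr_surj ((Cons P F u).W k) (fun x y => rfl) (W_surj P F u k) a, Fintype.card_fun]
    simp
  · intro w
    rw [pr_surj (Cons P F u).Wall (fun x y => rfl) (Wall_surj P F u) w]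
    rw [Finset.prod_congr rfl
      (fun k _ => pr_surj ((Cons P F u).W k) (fun x y => rfl) (W_surj P F u k) (w k))]
    rw [Finset.prod_const, Finset.card_univ, Fintype.card_fun, Fintype.card_fin, inv_pow]
    push_cast
    ring
  · intro w z
    rw [pr_surj _ (fun x y => rfl) (WallZS_surj P F u) (w, z),
      pr_surj (Cons P F u).Wall (fun x y => rfl) (Wall_surj P F u) w,
      pr_surj (Cons P F u).ZS (fun x y => rfl) (ZS_surj P F u) z,
      Fintype.card_prod]
    push_cast
    rw [mul_inv]

lemma det (u : Fin K) : (Cons P F u).Det := by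
  constructor
  · intro k
    refine ⟨fun z => if hk : k ∈ P.Sbar then z (P.Sbar.equivFin ⟨k, hk⟩)
      else if k = u then -∑ i, z i else 0, fun ω => ?_⟩
    show Pad P F u ω.2 k = if hk : k ∈ P.Sbar then (Cons P F u).ZS ω (P.Sbar.equivFin ⟨k, hk⟩)
      else if k = u then -∑ i, (Cons P F u).ZS ω i else 0
    unfold Pad
    by_cases hk : k ∈ P.Sbar
    · rw [dif_pos hk, dif_pos hk]
      show ω.2 ⟨k, hk⟩ = ω.2 (P.Sbar.equivFin.symm (P.Sbar.equivFin ⟨k, hk⟩))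
      rw [Equiv.symm_apply_apply]
    · rw [dif_neg hk, dif_neg hk]
      by_cases hku : k = u
      · rw [if_pos hku, if_pos hku]
        congr 1
        exact (Equiv.sum_comp P.Sbar.equivFin.symm ω.2).symm
      · rw [if_neg hku, if_neg hku]
  · intro k
    exact ⟨fun w z => fun _ => w 0 + z, fun ω => rfl⟩

lemma correct (u : Fin K) (hu : u ∉ P.Sbar) : (Cons P F u).Correct := by
  unfold Scheme.Correct
  have hsum : (Cons P F u).sumW
      = fun ω => (fun x : Fin K → Fin (Cons P F u).L → F => (fun i => ∑ k, x k i))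
          ((Cons P F u).Xall ω) := by
    funext ω i
    rw [Scheme.sumW, Finset.sum_apply]
    show ∑ k, ω.1 k = ∑ k, (ω.1 k + Pad P F u ω.2 k)
    rw [Finset.sum_add_distrib, Pad_sum P F u hu ω.2, add_zero]
  rw [hsum]
  exact Hc_comp (Fintype.card F) (Cons P F u).p (Cons P F u).Xall
    (fun x => fun i => ∑ k, x k i)

lemma good (u : Fin K) (hu : u ∉ P.Sbar) : (Cons P F u).Good :=
  ⟨validP P F u, indepUnif P F u, det P F u, correct P F u hu⟩

end
end Conc5

open WeakSecureSummation in
/-- if `a* ≤ K-1`, `a* = |S̄|` and `|Q| < K`, then for every finite field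
the key rate `a*` is achievable with `L_X = L` and `L_Z = a*·L`. -/
theorem achievability_otherwise_case_small_Q {K M N : ℕ} (hK : 2 ≤ K)
    (P : Pattern K M N) (hP : P.Valid)
    (h1 : P.aStar ≤ K - 1) (h2 : P.aStar = P.Sbar.card) (h3 : P.Q.card < K)
    (F : Type) [Field F] [Fintype F] [DecidableEq F] :
    ∃ C : Scheme K F, 1 ≤ C.L ∧ C.LX = C.L ∧ C.LZ = P.aStar * C.L ∧
      C.Good ∧ C.Secure P := by
  classical
  -- a user outside `Q`
  obtain ⟨u, hu⟩ : ∃ u : Fin K, u ∉ P.Q := by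
    by_contra hcon
    push_neg at hcon
    have hQu : P.Q = Finset.univ := Finset.eq_univ_iff_forall.2 hcon
    rw [hQu, Finset.card_univ, Fintype.card_fin] at h3
    exact lt_irrefl K h3
  -- basic structural facts
  obtain ⟨m0, hm0⟩ := hP.2.2.1
  have hSsub : ∀ m, P.S m ⊆ P.Sbar := fun m =>
    subset_trans (Finset.subset_biUnion_of_mem P.S (Finset.mem_univ m))
      Finset.subset_union_left
  have hSbar_pos : 0 < P.Sbar.card :=
    Finset.card_pos.2 ⟨hm0.choose, hSsub m0 (hm0.choose_spec)⟩
  have hN : 0 < N := by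
    by_contra hn
    push_neg at hn
    interval_cases N
    have ha0 : P.aStar = 0 := by
      unfold Pattern.aStar
      rw [Finset.univ_eq_empty, Finset.sup_empty]
      rfl
    rw [ha0] at h2
    omega
  have : NeZero N := ⟨hN.ne'⟩
  have : NeZero M := ⟨m0.pos.ne'⟩
  -- a maximal pair exists, hence `S̄ ⊆ Q`
  obtain ⟨mn, -, hmn⟩ := Finset.exists_mem_eq_sup (Finset.univ : Finset (Fin M × Fin N))
    (Finset.univ_nonempty (α := Fin M × Fin N)) (fun mn => (P.A mn.1 mn.2).card)
  have hAcard : (P.A mn.1 mn.2).card = P.aStar := hmn.symm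
  have hQsub : P.Sbar ⊆ P.Q := by
    have hA : P.A mn.1 mn.2 = P.Sbar := by
      apply Finset.eq_of_subset_of_card_le Finset.inter_subset_right
      show P.Sbar.card ≤ (P.A mn.1 mn.2).card
      rw [hAcard, ← h2]
    intro x hx
    unfold Pattern.Q
    rw [Finset.mem_biUnion]
    refine ⟨mn, Finset.mem_univ _, ?_⟩
    rw [if_pos hAcard]
    have : x ∈ P.A mn.1 mn.2 := hA.symm ▸ hx
    exact (Finset.mem_inter.1 this).1
  have huSbar : u ∉ P.Sbar := fun h => hu (hQsub h)
  refine ⟨Conc.Cons P F u, le_refl 1, rfl, ?_, Conc5.good P F u huSbar, ?_⟩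
  · show P.Sbar.card = P.aStar * 1
    rw [mul_one]
    exact h2.symm
  · -- security
    intro m n
    by_cases hv : ∃ v ∈ P.Sbar, v ∉ P.S m ∪ P.T n
    · obtain ⟨v, hv1, hv2⟩ := hv
      have hvS : v ∉ P.S m := fun h => hv2 (Finset.mem_union_left _ h)
      have hvT : v ∉ P.T n := fun h => hv2 (Finset.mem_union_right _ h)
      exact Conc4.secure_pair P F u v m n huSbar (hSsub m) hvS hvT (Or.inl hv1)
    · push_neg at hv
      have hA : P.A m n = P.Sbar := by
        apply Finset.Subset.antisymm Finset.inter_subset_right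
        intro x hx
        exact Finset.mem_inter.2 ⟨hv x hx, hx⟩
      have hAcard2 : (P.A m n).card = P.aStar := by rw [hA, ← h2]
      have hQsub2 : P.S m ∪ P.T n ⊆ P.Q := by
        intro x hx
        unfold Pattern.Q
        rw [Finset.mem_biUnion]
        exact ⟨(m, n), Finset.mem_univ _, by rw [if_pos hAcard2]; exact hx⟩
      have huT : u ∉ P.T n := fun h => hu (hQsub2 (Finset.mem_union_right _ h))
      have huS : u ∉ P.S m := fun h => hu (hQsub2 (Finset.mem_union_left _ h))
      exact Conc4.secure_pair P F u u m n huSbar (hSsub m) huS huT (Or.inr rfl)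
end
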